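/- arXiv:math/0601317 — 4 statements merged into one kernel-verified Lean document; each statement's English description precedes it below -/
import Mathlib

section
/- Let (W,S) be a finite Coxeter system and σ an automorphism of W with σ(S)=S. Then the radical of the fixed-point algebra Σ(W)^σ equals the σ-fixed points of the radical of Σ(W): Rad(Σ(W)^σ) = (Rad Σ(W))^σ. -/
open MonoidAlgebra

variable {B W : Type*} [DecidableEq B] [Fintype B] [Group W] [Fintype W] [DecidableEq W]

/-- `x_I`: the sum, in the group algebra `ℚW`, of the minimal length coset
representatives of the standard parabolic subgroup `W_I` in `W`, i.e. the sum of the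
`w ∈ W` such that `ws > w` for all `s ∈ I`. -/
noncomputable def descentBasis {M : CoxeterMatrix B} (cs : CoxeterSystem M W)
    (I : Finset B) : MonoidAlgebra ℚ W :=
  ∑ w : W, if ∀ i ∈ I, cs.length w < cs.length (w * cs.simple i)
    then MonoidAlgebra.single w (1 : ℚ) else 0

/-- `A` is the Solomon descent algebra `Σ(W)` of `(W,S)`: a subalgebra of the group
algebra `ℚW` whose underlying set is the span of the elements `x_I`, `I ⊆ S`.
(By Solomon's theorem this span is indeed closed under multiplication.) -/
def IsDescentAlgebra {M : CoxeterMatrix B} (cs : CoxeterSystem M W)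
    (A : Subalgebra ℚ (MonoidAlgebra ℚ W)) : Prop :=
  (A : Set (MonoidAlgebra ℚ W)) = Submodule.span ℚ (Set.range (descentBasis cs))



section RingTheory
variable {R : Type*} [Ring R]

lemma nilp_swap {x y : R} (h : IsNilpotent (x * y)) : IsNilpotent (y * x) := by
  obtain ⟨n, hn⟩ := h
  refine ⟨n + 1, ?_⟩
  have key : ∀ m : ℕ, (y * x) ^ (m + 1) = y * (x * y) ^ m * x := by
    intro m
    induction m with
    | zero => simp [pow_succ]
    | succ m ih => rw [pow_succ, ih, pow_succ]; noncomm_ring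
  rw [key n, hn, mul_zero, zero_mul]

/-- `1 - r*z` has a left inverse when `z` is in the Jacobson radical. -/
lemma left_inv_one_sub_of_mem_jacobson {z : R} (hz : z ∈ (⊥ : Ideal R).jacobson) (r : R) :
    ∃ u : R, u * (1 - r * z) = 1 := by
  by_cases h : Ideal.span {1 - r * z} = ⊤
  · have : (1 : R) ∈ Ideal.span ({1 - r * z} : Set R) := h ▸ Submodule.mem_top
    obtain ⟨u, hu⟩ := Submodule.mem_span_singleton.mp this
    exact ⟨u, by simpa [smul_eq_mul] using hu⟩
  · exfalso
    obtain ⟨m, hm, hle⟩ := Ideal.exists_le_maximal _ h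
    have h1 : (1 - r * z) ∈ m := hle (Ideal.subset_span rfl)
    have hzm : z ∈ m := by
      have : (⊥ : Ideal R).jacobson ≤ m := sInf_le ⟨bot_le, hm⟩
      exact this hz
    have : (1 : R) ∈ m := by
      have := m.add_mem h1 (m.mul_mem_left r hzm)
      simpa using this
    exact hm.ne_top (Ideal.eq_top_of_isUnit_mem m this isUnit_one)

lemma mem_jacobson_bot_iff_nilpotent [IsArtinianRing R] (x : R) :
    x ∈ (⊥ : Ideal R).jacobson ↔ ∀ y : R, IsNilpotent (x * y) := by
  constructor
  · intro hx y
    have hz : y * x ∈ (⊥ : Ideal R).jacobson := Ideal.mul_mem_left _ y hx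
    set z := y * x with hzdef
    -- the descending chain of left ideals R z^n stabilizes
    have mono : ∀ a b : ℕ, a ≤ b →
        Ideal.span ({z ^ b} : Set R) ≤ Ideal.span ({z ^ a} : Set R) := by
      intro a b hab
      rw [Ideal.span_le]
      intro w hw
      rw [Set.mem_singleton_iff] at hw
      subst hw
      exact Submodule.mem_span_singleton.mpr
        ⟨z ^ (b - a), by rw [smul_eq_mul, ← pow_add]; congr 1; omega⟩
    obtain ⟨n, hn⟩ := IsArtinian.monotone_stabilizes (R := R) (M := R)
      ⟨fun n => OrderDual.toDual (Ideal.span ({z ^ n} : Set R)),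
        fun a b hab => mono a b hab⟩
    have hmem : z ^ n ∈ Ideal.span ({z ^ (n + 1)} : Set R) := by
      have := hn (n + 1) (Nat.le_succ n)
      have e : Ideal.span ({z ^ n} : Set R) = Ideal.span ({z ^ (n+1)} : Set R) :=
        congrArg OrderDual.ofDual this
      exact e ▸ Ideal.subset_span rfl
    obtain ⟨r, hr⟩ := Submodule.mem_span_singleton.mp hmem
    have key : (1 - r * z) * z ^ n = 0 := by
      have : r * z * z ^ n = z ^ n := by
        rw [mul_assoc, ← pow_succ']; simpa [smul_eq_mul] using hr
      rw [sub_mul, one_mul, this, sub_self]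
    obtain ⟨u, hu⟩ := left_inv_one_sub_of_mem_jacobson hz r
    have : z ^ n = 0 := by
      calc z ^ n = u * (1 - r * z) * z ^ n := by rw [hu, one_mul]
        _ = u * ((1 - r * z) * z ^ n) := by rw [mul_assoc]
        _ = 0 := by rw [key, mul_zero]
    exact nilp_swap ⟨n, this⟩
  · intro h
    rw [Ideal.jacobson]
    rw [Ideal.mem_sInf]
    rintro m ⟨-, hm⟩
    by_contra hxm
    have hlt : m < m ⊔ Ideal.span {x} := by
      refine lt_of_le_of_ne le_sup_left (fun he => hxm ?_)
      rw [he]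
      exact Submodule.mem_sup_right (Ideal.subset_span rfl)
    have htop : m ⊔ Ideal.span {x} = ⊤ := hm.1.2 _ hlt
    have h1 : (1 : R) ∈ m ⊔ Ideal.span {x} := htop ▸ Submodule.mem_top
    obtain ⟨u, hu, v, hv, huv⟩ := Submodule.mem_sup.mp h1
    obtain ⟨r, hr⟩ := Submodule.mem_span_singleton.mp hv
    have hnil : IsNilpotent v := by
      rw [← hr, smul_eq_mul]
      exact nilp_swap (h r)
    have hunit : IsUnit u := by
      have : u = 1 - v := eq_sub_of_add_eq huv
      rw [this]
      exact hnil.isUnit_one_sub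
    exact hm.ne_top (Ideal.eq_top_of_isUnit_mem m hu hunit)

end RingTheory


open LinearMap Module Module.End

section AlgClosed
variable {K V : Type*} [Field K] [IsAlgClosed K] [CharZero K]
  [AddCommGroup V] [Module K V] [FiniteDimensional K V]

lemma trace_restrict_maxGen (g : Module.End K V) (μ : K) (k : ℕ)
    (hmap : ∀ k : ℕ, Set.MapsTo (g ^ k) (g.maxGenEigenspace μ) (g.maxGenEigenspace μ)) :
    trace K (g.maxGenEigenspace μ) ((g ^ k).restrict (hmap k)) =
      μ ^ k * (finrank K (g.maxGenEigenspace μ) : K) := by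
  induction k with
  | zero =>
    have : (g ^ 0).restrict (hmap 0) = LinearMap.id := by
      ext v; simp [LinearMap.restrict_apply]
    rw [this]; simp [trace_id]
  | succ k ih =>
    have hres : (g ^ (k+1)).restrict (hmap (k+1)) =
        ((g ^ k).restrict (hmap k)) ∘ₗ (g.restrict (hmap 1)) := by
      ext v; simp [LinearMap.coe_restrict_apply, pow_succ, Module.End.mul_apply]; rfl
    rw [hres]
    have hnil : IsNilpotent ((g.restrict (hmap 1)) - algebraMap K _ μ) := by
      have hms : Set.MapsTo ⇑(g - algebraMap K (Module.End K V) μ)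
          (g.maxGenEigenspace μ) (g.maxGenEigenspace μ) :=
        mapsTo_maxGenEigenspace_of_comm (Algebra.mul_sub_algebraMap_commutes g μ) μ
      have he : (g.restrict (hmap 1)) - algebraMap K _ μ =
          (g - algebraMap K (Module.End K V) μ).restrict hms := by
        ext v
        simp [LinearMap.coe_restrict_apply, Module.algebraMap_end_apply]; rfl
      rw [he]
      exact g.isNilpotent_restrict_maxGenEigenspace_sub_algebraMap μ hms
    have hcomm : Commute ((g ^ k).restrict (hmap k)) (g.restrict (hmap 1)) :=
      LinearMap.restrict_commute ((Commute.refl g).pow_left k) _ _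
    rw [trace_comp_eq_mul_of_commute_of_isNilpotent μ hcomm hnil, ih]
    ring

lemma isNilpotent_of_forall_trace_pow (g : Module.End K V)
    (h : ∀ k : ℕ, 1 ≤ k → trace K V (g ^ k) = 0) : IsNilpotent g := by
  classical
  set N : K → Submodule K V := fun μ => g.maxGenEigenspace μ with hN
  have htop : ⨆ μ, N μ = ⊤ := g.iSup_maxGenEigenspace_eq_top
  have hind := g.independent_maxGenEigenspace
  have hds : DirectSum.IsInternal N :=
    DirectSum.isInternal_submodule_of_iSupIndep_of_iSup_eq_top hind htop
  have h_fin : {μ | N μ ≠ ⊥}.Finite := WellFoundedGT.finite_ne_bot_of_iSupIndep hind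
  have hmap : ∀ (μ : K) (k : ℕ), Set.MapsTo (g ^ k) (N μ) (N μ) := fun μ k =>
    mapsTo_maxGenEigenspace_of_comm ((Commute.refl g).pow_right k) μ
  -- power sums vanish
  have hps : ∀ k : ℕ, 1 ≤ k →
      ∑ μ ∈ h_fin.toFinset, μ ^ k * (finrank K (N μ) : K) = 0 := by
    intro k hk
    calc ∑ μ ∈ h_fin.toFinset, μ ^ k * (finrank K (N μ) : K)
        = ∑ μ ∈ h_fin.toFinset, trace K (N μ) ((g ^ k).restrict (hmap μ k)) :=
          Finset.sum_congr rfl (fun μ _ => (trace_restrict_maxGen g μ k (hmap μ)).symm)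
      _ = trace K V (g ^ k) :=
          (LinearMap.trace_eq_sum_trace_restrict' hds h_fin (fun μ => hmap μ k)).symm
      _ = 0 := h k hk
  -- all nonzero eigenvalues have zero multiplicity: show the filtered set is empty
  have hzero : ∀ μ : K, μ ≠ 0 → N μ = ⊥ := by
    intro μ₀ hμ₀
    by_contra hbot
    set T : Finset K := h_fin.toFinset.filter (fun μ => μ ≠ 0) with hT
    have hμ₀T : μ₀ ∈ T := by
      simp [hT, Set.Finite.mem_toFinset, hbot, hμ₀]
    set t := T.card with ht
    set e := T.equivFin with he
    set f : Fin t → K := fun j => (e.symm j : K) with hf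
    have hfinj : Function.Injective f := fun a b hab => by
      apply e.symm.injective
      exact Subtype.ext hab
    set v : Fin t → K := fun j => (finrank K (N (f j)) : K) * f j with hv
    have hvz : v = 0 := by
      apply Matrix.eq_zero_of_forall_pow_sum_mul_pow_eq_zero hfinj
      intro i
      have key : ∑ j : Fin t, v j * f j ^ (i : ℕ) =
          ∑ μ ∈ T, μ ^ ((i : ℕ) + 1) * (finrank K (N μ) : K) := by
        rw [← Finset.sum_coe_sort T (fun μ => (μ : K) ^ ((i:ℕ)+1) * (finrank K (N μ) : K))]
        refine (Fintype.sum_equiv e (fun p => (p : K) ^ ((i:ℕ)+1) * (finrank K (N (p : K)) : K))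
          (fun j => v j * f j ^ (i : ℕ)) ?_).symm
        intro p
        have hfe : f (e p) = (p : K) := by simp [hf]
        simp only [hv]
        rw [hfe]
        ring
      rw [key]
      have hsub : ∑ μ ∈ T, μ ^ ((i : ℕ) + 1) * (finrank K (N μ) : K) =
          ∑ μ ∈ h_fin.toFinset, μ ^ ((i : ℕ) + 1) * (finrank K (N μ) : K) := by
        apply Finset.sum_subset (Finset.filter_subset _ _)
        intro μ hμ hμT
        have : μ = 0 := by
          by_contra hne
          exact hμT (Finset.mem_filter.mpr ⟨hμ, hne⟩)
        rw [this, zero_pow (Nat.succ_ne_zero _), zero_mul]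
      rw [hsub]
      exact hps _ (Nat.succ_le_succ (Nat.zero_le _))
    -- contradiction: μ₀ has positive multiplicity
    have hj : ∃ j : Fin t, f j = μ₀ := by
      refine ⟨e ⟨μ₀, hμ₀T⟩, ?_⟩
      simp [hf]
    obtain ⟨j, hj⟩ := hj
    have hthis := congrFun hvz j
    simp only [hv, Pi.zero_apply] at hthis
    rw [hj] at hthis
    rcases mul_eq_zero.mp hthis with h1 | h2
    · have : finrank K (N μ₀) = 0 := by exact_mod_cast h1
      rw [Submodule.finrank_eq_zero] at this
      exact hbot this
    · exact hμ₀ h2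
  -- hence everything is in the generalized 0-eigenspace
  have hNle : ∀ μ, N μ ≤ N 0 := by
    intro μ
    by_cases hμ : μ = 0
    · rw [hμ]
    · rw [hzero μ hμ]; exact bot_le
  have htop0 : N 0 = ⊤ := by
    rw [← htop]
    exact le_antisymm (le_iSup N 0) (iSup_le hNle)
  rw [LinearMap.isNilpotent_iff_charpoly, LinearMap.charpoly_eq_X_pow_iff]
  intro m
  have hm : m ∈ N 0 := htop0 ▸ Submodule.mem_top
  rw [hN] at hm
  rw [Module.End.mem_maxGenEigenspace] at hm
  obtain ⟨k, hk⟩ := hm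
  exact ⟨k, by simpa using hk⟩

end AlgClosed

set_option synthInstance.maxHeartbeats 1000000 in
set_option maxHeartbeats 1000000 in
lemma end_isNilpotent_of_forall_trace_pow {V : Type*} [AddCommGroup V] [Module ℚ V]
    [FiniteDimensional ℚ V] (g : Module.End ℚ V)
    (h : ∀ k : ℕ, 1 ≤ k → trace ℚ V (g ^ k) = 0) : IsNilpotent g := by
  classical
  set K := AlgebraicClosure ℚ
  let b := Module.finBasis ℚ V
  set m : Matrix _ _ ℚ := LinearMap.toMatrix b b g with hm
  have hpow : ∀ k : ℕ, m ^ k = LinearMap.toMatrix b b (g ^ k) := by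
    intro k
    induction k with
    | zero => simp [hm]
    | succ k ih => rw [pow_succ, pow_succ, ih, ← LinearMap.toMatrix_mul]
  have hmtr : ∀ k : ℕ, 1 ≤ k → Matrix.trace (m ^ k) = 0 := by
    intro k hk
    rw [hpow k, ← LinearMap.trace_eq_matrix_trace]
    exact h k hk
  set m' : Matrix _ _ K := (algebraMap ℚ K).mapMatrix m with hm'
  have hmaptr : ∀ p : Matrix (Fin (Module.finrank ℚ V)) (Fin (Module.finrank ℚ V)) ℚ,
      ((algebraMap ℚ K).mapMatrix p).trace
      = algebraMap ℚ K p.trace := by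
    intro p
    simp [Matrix.trace, Matrix.diag, RingHom.mapMatrix_apply, Matrix.map_apply]
  have hm'tr : ∀ k : ℕ, 1 ≤ k → Matrix.trace (m' ^ k) = 0 := by
    intro k hk
    rw [hm', ← map_pow, hmaptr, hmtr k hk]; exact map_zero _
  set g' := Matrix.toLinAlgEquiv' m' with hg'
  have hg'nil : IsNilpotent g' := by
    apply isNilpotent_of_forall_trace_pow
    intro k hk
    have h2 : g' ^ k = Matrix.toLinAlgEquiv' (m' ^ k) := by rw [hg', ← map_pow]
    rw [h2]
    rw [LinearMap.trace_eq_matrix_trace K (Pi.basisFun K _) (Matrix.toLinAlgEquiv' (m' ^ k))]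
    rw [show LinearMap.toMatrix (Pi.basisFun K _) (Pi.basisFun K _)
        (Matrix.toLinAlgEquiv' (m' ^ k)) = m' ^ k from by
      rw [LinearMap.toMatrix_eq_toMatrix']
      exact LinearMap.toMatrixAlgEquiv'_toLinAlgEquiv' (m' ^ k)]
    exact hm'tr k hk
  have hm'nil : IsNilpotent m' := by
    obtain ⟨n, hn⟩ := hg'nil
    refine ⟨n, ?_⟩
    apply Matrix.toLinAlgEquiv'.injective
    rw [map_pow, map_zero]
    exact hn
  have hmnil : IsNilpotent m := by
    obtain ⟨n, hn⟩ := hm'nil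
    refine ⟨n, ?_⟩
    have h4 : (algebraMap ℚ K).mapMatrix (m ^ n) = 0 := by
      rw [map_pow]; exact hn
    ext i j
    have h5 := Matrix.ext_iff.mpr h4 i j
    simp only [RingHom.mapMatrix_apply, Matrix.map_apply, Matrix.zero_apply] at h5
    have h6 := (algebraMap ℚ K).injective (h5.trans (map_zero (algebraMap ℚ K)).symm)
    simpa using h6
  obtain ⟨n, hn⟩ := hmnil
  refine ⟨n, ?_⟩
  apply (LinearMap.toMatrix b b).injective
  rw [← hpow n, hn, map_zero]

section TraceForm
variable {V : Type*} [Ring V] [Algebra ℚ V] [FiniteDimensional ℚ V]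

lemma tf_zero_of_nilpotent {z : V} (h : IsNilpotent z) :
    trace ℚ V (LinearMap.mulLeft ℚ z) = 0 := by
  obtain ⟨n, hn⟩ := h
  have hnil : IsNilpotent (LinearMap.mulLeft ℚ z) :=
    ⟨n, by rw [LinearMap.pow_mulLeft, hn]; ext a; simp⟩
  exact (LinearMap.isNilpotent_trace_of_isNilpotent hnil).eq_zero

lemma nilpotent_of_tf (z : V)
    (h : ∀ k : ℕ, 1 ≤ k → trace ℚ V (LinearMap.mulLeft ℚ (z ^ k)) = 0) : IsNilpotent z := by
  have hg : IsNilpotent (LinearMap.mulLeft ℚ z) := by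
    apply end_isNilpotent_of_forall_trace_pow
    intro k hk
    rw [LinearMap.pow_mulLeft]
    exact h k hk
  obtain ⟨n, hn⟩ := hg
  refine ⟨n, ?_⟩
  calc z ^ n = (LinearMap.mulLeft ℚ (z ^ n)) 1 := by simp
    _ = (LinearMap.mulLeft ℚ z ^ n) 1 := by rw [LinearMap.pow_mulLeft]
    _ = 0 := by rw [hn]; rfl

lemma tf_invariant (ψ : V ≃ₐ[ℚ] V) (z : V) :
    trace ℚ V (LinearMap.mulLeft ℚ (ψ z)) = trace ℚ V (LinearMap.mulLeft ℚ z) := by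
  have hconj : LinearMap.mulLeft ℚ (ψ z) = ψ.toLinearEquiv.conj (LinearMap.mulLeft ℚ z) := by
    ext a
    simp only [LinearMap.mulLeft_apply, LinearEquiv.conj_apply, LinearMap.comp_apply,
      LinearEquiv.coe_coe, AlgEquiv.toLinearEquiv_apply]
    rw [show ψ.toLinearEquiv.symm = ψ.symm.toLinearEquiv from rfl]
    rw [AlgEquiv.toLinearEquiv_apply, map_mul, AlgEquiv.apply_symm_apply]
  rw [hconj]
  exact LinearMap.trace_conj' _ _

end TraceForm

section Cox
variable {M : CoxeterMatrix B} (cs : CoxeterSystem M W)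

lemma sigma_wordProd (σ : W ≃* W) (π : B → B) (hπ : ∀ i, σ (cs.simple i) = cs.simple (π i))
    (l : List B) : σ (cs.wordProd l) = cs.wordProd (l.map π) := by
  rw [CoxeterSystem.wordProd, CoxeterSystem.wordProd, map_list_prod σ, List.map_map,
    List.map_map]
  congr 1
  apply List.map_congr_left
  intro i _
  exact hπ i

lemma length_sigma_le (σ : W ≃* W) (π : B → B) (hπ : ∀ i, σ (cs.simple i) = cs.simple (π i))
    (w : W) : cs.length (σ w) ≤ cs.length w := by
  obtain ⟨l, hlen, hw⟩ := cs.exists_reduced_word w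
  conv_lhs => rw [hw, sigma_wordProd cs σ π hπ]
  calc cs.length (cs.wordProd (l.map π)) ≤ (l.map π).length := cs.length_wordProd_le _
    _ = l.length := List.length_map _
    _ = cs.length w := by rw [hw]; exact hlen.symm

lemma exists_pi (σ : W ≃* W) (hσ : σ '' Set.range cs.simple = Set.range cs.simple) :
    ∃ π : B → B, ∀ i, σ (cs.simple i) = cs.simple (π i) := by
  have h : ∀ i : B, ∃ j, σ (cs.simple i) = cs.simple j := by
    intro i
    have : σ (cs.simple i) ∈ Set.range cs.simple := by
      rw [← hσ]; exact ⟨cs.simple i, ⟨i, rfl⟩, rfl⟩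
    obtain ⟨j, hj⟩ := this
    exact ⟨j, hj.symm⟩
  choose π hπ using h
  exact ⟨π, hπ⟩

lemma length_sigma (σ : W ≃* W) (hσ : σ '' Set.range cs.simple = Set.range cs.simple)
    (w : W) : cs.length (σ w) = cs.length w := by
  obtain ⟨π, hπ⟩ := exists_pi cs σ hσ
  have hσ' : ⇑σ.symm '' Set.range cs.simple = Set.range cs.simple := by
    have h2 : ⇑σ.symm '' (⇑σ '' Set.range cs.simple) = Set.range cs.simple := by
      rw [Set.image_image]
      simp
    rw [hσ] at h2
    exact h2
  obtain ⟨π', hπ'⟩ := exists_pi cs σ.symm hσ'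
  refine le_antisymm (length_sigma_le cs σ π hπ w) ?_
  have := length_sigma_le cs σ.symm π' hπ' (σ w)
  simpa using this

lemma domCongr_descentBasis (σ : W ≃* W) (hσ : σ '' Set.range cs.simple = Set.range cs.simple)
    (π : B → B) (hπ : ∀ i, σ (cs.simple i) = cs.simple (π i)) (I : Finset B) :
    MonoidAlgebra.domCongr ℚ ℚ σ (descentBasis cs I) = descentBasis cs (I.image π) := by
  classical
  rw [descentBasis, map_sum, descentBasis]
  rw [← Equiv.sum_comp σ.toEquiv (fun w => if ∀ i ∈ I.image π,
      cs.length w < cs.length (w * cs.simple i) then MonoidAlgebra.single w (1:ℚ) else 0)]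
  apply Finset.sum_congr rfl
  intro w _
  rw [apply_ite (MonoidAlgebra.domCongr ℚ ℚ σ), map_zero, MonoidAlgebra.domCongr_single]
  simp only [MulEquiv.toEquiv_eq_coe, EquivLike.coe_coe, Equiv.coe_fn_mk]
  have hiff : (∀ i ∈ I, cs.length w < cs.length (w * cs.simple i)) ↔
      (∀ i ∈ I.image π, cs.length (σ w) < cs.length (σ w * cs.simple i)) := by
    constructor
    · intro h j hj
      obtain ⟨i, hi, rfl⟩ := Finset.mem_image.mp hj
      rw [← hπ i, ← map_mul, length_sigma cs σ hσ, length_sigma cs σ hσ]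
      exact h i hi
    · intro h i hi
      have := h (π i) (Finset.mem_image_of_mem π hi)
      rw [← hπ i, ← map_mul, length_sigma cs σ hσ, length_sigma cs σ hσ] at this
      exact this
  by_cases hc : ∀ i ∈ I, cs.length w < cs.length (w * cs.simple i)
  · rw [if_pos hc, if_pos (hiff.mp hc)]
  · rw [if_neg hc, if_neg (fun hcc => hc (hiff.mpr hcc))]

lemma domCongr_mem_span (σ : W ≃* W) (hσ : σ '' Set.range cs.simple = Set.range cs.simple)
    {x : MonoidAlgebra ℚ W} (hx : x ∈ Submodule.span ℚ (Set.range (descentBasis cs))) :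
    MonoidAlgebra.domCongr ℚ ℚ σ x ∈ Submodule.span ℚ (Set.range (descentBasis cs)) := by
  obtain ⟨π, hπ⟩ := exists_pi cs σ hσ
  have h1 := Submodule.apply_mem_span_image_of_mem_span
    (MonoidAlgebra.domCongr ℚ ℚ σ).toLinearMap hx
  refine Submodule.span_mono ?_ h1
  rintro _ ⟨_, ⟨I, rfl⟩, rfl⟩
  exact ⟨I.image π, (domCongr_descentBasis cs σ hσ π hπ I).symm⟩

lemma domCongr_comp (e f : W ≃* W) (x : MonoidAlgebra ℚ W) :
    MonoidAlgebra.domCongr ℚ ℚ (e.trans f) x =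
      MonoidAlgebra.domCongr ℚ ℚ f (MonoidAlgebra.domCongr ℚ ℚ e x) := by
  have h : (MonoidAlgebra.domCongr ℚ ℚ (e.trans f)).toLinearMap =
      ((MonoidAlgebra.domCongr ℚ ℚ f).toLinearMap).comp
        (MonoidAlgebra.domCongr ℚ ℚ e).toLinearMap := by
    refine MonoidAlgebra.lhom_ext' (fun w => LinearMap.ext (fun r => ?_))
    show MonoidAlgebra.domCongr ℚ ℚ (e.trans f) (MonoidAlgebra.single w r) =
      MonoidAlgebra.domCongr ℚ ℚ f (MonoidAlgebra.domCongr ℚ ℚ e (MonoidAlgebra.single w r))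
    rw [MonoidAlgebra.domCongr_single, MonoidAlgebra.domCongr_single,
      MonoidAlgebra.domCongr_single]
    rfl
  exact congrFun (congrArg (fun (L : _ →ₗ[ℚ] _) => ⇑L) h) x

end Cox

noncomputable instance : Module.Finite ℚ (MonoidAlgebra ℚ W) :=
  Module.Finite.equiv ((Finsupp.linearEquivFunOnFinite ℚ ℚ W).symm.trans
    (MonoidAlgebra.coeffLinearEquiv ℚ).symm)

set_option synthInstance.maxHeartbeats 1000000 in
set_option maxHeartbeats 4000000 in
lemma jac_iff_aux (S : Subalgebra ℚ (MonoidAlgebra ℚ W)) (a : S) :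
    a ∈ (⊥ : Ideal S).jacobson ↔
      ∀ y ∈ S, IsNilpotent ((a : MonoidAlgebra ℚ W) * y) := by
  haveI : IsArtinianRing S := isArtinian_of_tower ℚ inferInstance
  rw [mem_jacobson_bot_iff_nilpotent]
  constructor
  · intro h y hy
    obtain ⟨n, hn⟩ := h ⟨y, hy⟩
    refine ⟨n, ?_⟩
    have h2 := congrArg (Subalgebra.val S) hn
    simpa [map_pow] using h2
  · intro h b
    obtain ⟨n, hn⟩ := h (b : MonoidAlgebra ℚ W) b.2
    refine ⟨n, ?_⟩
    rw [Subtype.ext_iff]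
    push_cast
    exact hn


set_option synthInstance.maxHeartbeats 1000000 in
set_option maxHeartbeats 1000000 in
/-- For a length-preserving automorphism `σ` of `W` (i.e. `σ(S) = S`), the Jacobson
radical of the fixed-point algebra `Σ(W)^σ` equals the set of `σ`-fixed points of the
Jacobson radical of `Σ(W)`. -/
theorem radical_fixedPoints_descentAlgebra {M : CoxeterMatrix B}
    (cs : CoxeterSystem M W) (σ : W ≃* W)
    (hσ : σ '' Set.range cs.simple = Set.range cs.simple)
    (A A' : Subalgebra ℚ (MonoidAlgebra ℚ W)) (hA : IsDescentAlgebra cs A)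
    (hA' : (A' : Set (MonoidAlgebra ℚ W)) =
      {a | a ∈ A ∧ MonoidAlgebra.domCongr ℚ ℚ σ a = a}) :
    {x : MonoidAlgebra ℚ W | ∃ a : A', ↑a = x ∧ a ∈ (⊥ : Ideal A').jacobson} =
      {x : MonoidAlgebra ℚ W | ∃ a : A, ↑a = x ∧ a ∈ (⊥ : Ideal A).jacobson} ∩
        {x | MonoidAlgebra.domCongr ℚ ℚ σ x = x} := by
  classical
  obtain ⟨π, hπ⟩ := exists_pi cs σ hσ
  set φ := MonoidAlgebra.domCongr ℚ ℚ σ with hφdef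
  have hA2 : (A : Set (MonoidAlgebra ℚ W)) =
      ↑(Submodule.span ℚ (Set.range (descentBasis cs))) := hA
  have hA'set : ∀ z : MonoidAlgebra ℚ W, z ∈ A' ↔ (z ∈ A ∧ φ z = z) := by
    intro z
    rw [← SetLike.mem_coe, hA']
    exact Iff.rfl
  have hφA : ∀ z, z ∈ A → φ z ∈ A := by
    intro z hz
    have h1 : z ∈ Submodule.span ℚ (Set.range (descentBasis cs)) := by
      rw [← SetLike.mem_coe, hA2] at hz
      exact hz
    have h2 := domCongr_mem_span cs σ hσ h1
    rw [← SetLike.mem_coe, hA2]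
    exact h2
  -- powers of σ
  set N := orderOf σ.toEquiv with hNdef
  have hNpos : 0 < N := orderOf_pos _
  set pw : ℕ → (W ≃* W) :=
    fun k => Nat.rec (MulEquiv.refl W) (fun _ e => e.trans σ) k with hpwdef
  set Φ : ℕ → (MonoidAlgebra ℚ W ≃ₐ[ℚ] MonoidAlgebra ℚ W) :=
    fun k => MonoidAlgebra.domCongr ℚ ℚ (pw k) with hΦdef
  have hpweq : ∀ (k : ℕ) (x : W), pw k x = (σ.toEquiv ^ k) x := by
    intro k
    induction k with
    | zero => intro x; simp [hpwdef]
    | succ k ih =>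
      intro x
      have h1 : pw (k+1) x = σ (pw k x) := rfl
      rw [h1, ih, pow_succ']
      rfl
  have hΦ0 : ∀ z, Φ 0 z = z := by
    intro z
    show MonoidAlgebra.domCongr ℚ ℚ (MulEquiv.refl W) z = z
    rw [MonoidAlgebra.domCongr_refl]
    rfl
  have hΦsucc : ∀ (k : ℕ) (z : MonoidAlgebra ℚ W), Φ (k+1) z = φ (Φ k z) :=
    fun k z => domCongr_comp (pw k) σ z
  have hΦN : ∀ z, Φ N z = z := by
    intro z
    have hpwN : pw N = MulEquiv.refl W := by
      apply MulEquiv.ext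
      intro x
      rw [hpweq, pow_orderOf_eq_one]
      rfl
    show MonoidAlgebra.domCongr ℚ ℚ (pw N) z = z
    rw [hpwN, MonoidAlgebra.domCongr_refl]
    rfl
  have hΦfix : ∀ (k : ℕ) (z : MonoidAlgebra ℚ W), φ z = z → Φ k z = z := by
    intro k z hz
    induction k with
    | zero => exact hΦ0 z
    | succ k ih => rw [hΦsucc, ih, hz]
  have hΦmemA : ∀ (k : ℕ) (z : MonoidAlgebra ℚ W), z ∈ A → Φ k z ∈ A := by
    intro k z hz
    induction k with
    | zero => rw [hΦ0]; exact hz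
    | succ k ih => rw [hΦsucc]; exact hφA _ ih
  -- the averaging argument
  have main_av : ∀ x : MonoidAlgebra ℚ W, x ∈ A → φ x = x →
      (∀ y, y ∈ A' → IsNilpotent (x * y)) → ∀ y, y ∈ A → IsNilpotent (x * y) := by
    intro x hxA hxfix hnil
    have key : ∀ w, w ∈ A →
        LinearMap.trace ℚ (MonoidAlgebra ℚ W) (LinearMap.mulLeft ℚ (x * w)) = 0 := by
      intro w hw
      set u : MonoidAlgebra ℚ W := (N:ℚ)⁻¹ • ∑ k ∈ Finset.range N, Φ k w with hu
      have huA : u ∈ A :=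
        A.smul_mem (A.sum_mem (fun k _ => hΦmemA k w hw)) _
      have huφ : φ u = u := by
        rw [hu, map_smul, map_sum]
        congr 1
        rw [Finset.sum_congr rfl (fun k _ => (hΦsucc k w).symm)]
        have h1 := Finset.sum_range_succ' (fun k => Φ k w) N
        have h2 := Finset.sum_range_succ (fun k => Φ k w) N
        have h3 := h1.symm.trans h2
        rw [hΦN w, hΦ0 w] at h3
        exact add_right_cancel h3
      have huA' : u ∈ A' := (hA'set u).mpr ⟨huA, huφ⟩
      have h0 := tf_zero_of_nilpotent (hnil u huA')
      have hxu2 : x * u = (N:ℚ)⁻¹ • ∑ k ∈ Finset.range N, x * Φ k w := by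
        rw [hu, mul_smul_comm, Finset.mul_sum]
      have hT : ∀ z : MonoidAlgebra ℚ W, LinearMap.mulLeft ℚ z
          = LinearMap.mul ℚ (MonoidAlgebra ℚ W) z :=
        fun z => LinearMap.ext (fun b => rfl)
      have hml : LinearMap.mulLeft ℚ (x * u)
          = (N:ℚ)⁻¹ • ∑ k ∈ Finset.range N, LinearMap.mulLeft ℚ (x * Φ k w) := by
        rw [hxu2, hT, map_smul, map_sum]
        simp only [hT]
      rw [hml, map_smul, map_sum] at h0
      have heach : ∀ k ∈ Finset.range N,
          LinearMap.trace ℚ (MonoidAlgebra ℚ W) (LinearMap.mulLeft ℚ (x * Φ k w))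
          = LinearMap.trace ℚ (MonoidAlgebra ℚ W) (LinearMap.mulLeft ℚ (x * w)) := by
        intro k _
        have h3 : x * Φ k w = Φ k (x * w) := by
          rw [map_mul, hΦfix k x hxfix]
        rw [h3]
        exact tf_invariant (Φ k) (x * w)
      rw [Finset.sum_congr rfl heach, Finset.sum_const, Finset.card_range] at h0
      have hNne : (N:ℚ) ≠ 0 := Nat.cast_ne_zero.mpr hNpos.ne'
      rw [smul_eq_mul, nsmul_eq_mul, ← mul_assoc, inv_mul_cancel₀ hNne, one_mul] at h0
      exact h0
    intro y hy
    apply nilpotent_of_tf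
    intro k hk
    obtain ⟨k', rfl⟩ : ∃ k', k = k' + 1 := ⟨k - 1, by omega⟩
    have hxw : (x*y)^(k'+1) = x * (y * (x*y)^k') := by
      rw [pow_succ', mul_assoc]
    rw [hxw]
    exact key _ (A.mul_mem hy (A.pow_mem (A.mul_mem hxA hy) k'))
  -- conclusion
  ext x
  simp only [Set.mem_setOf_eq, Set.mem_inter_iff]
  constructor
  · rintro ⟨a, rfl, ha⟩
    have hmem : (↑a : MonoidAlgebra ℚ W) ∈ A ∧ φ ↑a = ↑a := (hA'set ↑a).mp a.2
    have hnil' : ∀ y, y ∈ A' → IsNilpotent ((↑a : MonoidAlgebra ℚ W) * y) :=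
      fun y hy => (jac_iff_aux A' a).mp ha y hy
    refine ⟨⟨⟨↑a, hmem.1⟩, rfl, ?_⟩, hmem.2⟩
    rw [jac_iff_aux A]
    exact fun y hy => main_av ↑a hmem.1 hmem.2 hnil' y hy
  · rintro ⟨⟨b, hb1, hb2⟩, hfix⟩
    subst hb1
    have hmemA' : (↑b : MonoidAlgebra ℚ W) ∈ A' := (hA'set ↑b).mpr ⟨b.2, hfix⟩
    refine ⟨⟨↑b, hmemA'⟩, rfl, ?_⟩
    rw [jac_iff_aux A']
    intro y hy
    exact (jac_iff_aux A b).mp hb2 y ((hA'set y).mp hy).1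
end

section
/- In the descent algebra of a finite Coxeter system (W,S), for every I ⊆ S one has w₀ · x′_I = (−1)^{|I|} x′_I, where x′_I = Σ_{K⊆I} (−1/2)^{|I|−|K|} x_K and w₀ is the longest element (viewed as the element y_∅ ∈ Σ(W)). -/
open MonoidAlgebra

variable {B W : Type*} [DecidableEq B] [Fintype B] [Group W] [Fintype W] [DecidableEq W]

/-- `x′_I = Σ_{K ⊆ I} (−1/2)^{|I|−|K|} x_K`. -/
noncomputable def descentBasis' {M : CoxeterMatrix B} (cs : CoxeterSystem M W)
    (I : Finset B) : MonoidAlgebra ℚ W :=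
  ∑ K ∈ I.powerset, ((-(2:ℚ)⁻¹) ^ (I.card - K.card)) • descentBasis cs K

section Auxiliary
set_option linter.unusedSectionVars false
open CoxeterSystem List
variable {M : CoxeterMatrix B} (cs : CoxeterSystem M W)
local prefix:100 "s" => cs.simple
local prefix:100 "π" => cs.wordProd
local prefix:100 "ℓ" => cs.length

private lemma conj_simple_eq_simple_iff (i : B) (u : W) :
    s i * u * s i = s i ↔ u = s i := by
  constructor
  · intro hh
    have h1 : s i * (u * s i) = s i * 1 := by rw [← mul_assoc, hh, mul_one]
    have h2 : u * s i = 1 := mul_left_cancel h1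
    have := congrArg (· * s i) h2
    simpa [mul_assoc, cs.simple_mul_simple_self] using this
  · rintro rfl
    rw [cs.simple_mul_simple_self, one_mul]

noncomputable def sigma (i : B) : Equiv.Perm (W × ℤˣ) :=
  Function.Involutive.toPerm
    (fun x => (s i * x.1 * s i, if x.1 = s i then -x.2 else x.2))
    (by
      intro x
      have hfst : s i * (s i * x.1 * s i) * s i = x.1 := by
        simp [mul_assoc, cs.simple_mul_simple_cancel_left]
      by_cases h : x.1 = s i
      · have h2 : s i * x.1 * s i = s i := (conj_simple_eq_simple_iff cs i x.1).mpr h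
        obtain ⟨x1,x2⟩ := x
        simp_all
      · have h2 : ¬ (s i * x.1 * s i = s i) := fun hh =>
          h ((conj_simple_eq_simple_iff cs i x.1).mp hh)
        simp [h, h2, hfst])

lemma sigma_apply (i : B) (x : W × ℤˣ) :
    sigma cs i x = (s i * x.1 * s i, if x.1 = s i then -x.2 else x.2) := rfl


private lemma conj_eq_iff (j : B) (u v : W) :
    s j * u * s j = v ↔ u = s j * v * s j := by
  constructor
  · rintro rfl
    simp [mul_assoc, cs.simple_mul_simple_cancel_left]
  · rintro rfl
    simp [mul_assoc, cs.simple_mul_simple_cancel_left]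

private lemma key_iff (a b c u : W) : a * u * b = c ↔ u = a⁻¹ * c * b⁻¹ := by
  constructor
  · intro h; rw [← h]; group
  · rintro rfl; group

private lemma sigma_iter (i i' : B) (k : ℕ) (t : W) (ε : ℤˣ) :
    ((sigma cs i * sigma cs i') ^ k) (t, ε) =
      ((s i * s i') ^ k * t * (s i' * s i) ^ k,
        ε * ∏ a ∈ Finset.range (2 * k),
          (if t = (s i' * s i) ^ a * s i' then (-1 : ℤˣ) else 1)) := by
  set p := s i * s i' with hp
  set r := s i' * s i with hr
  have hsc : ∀ k : ℕ, s i' * p ^ k = r ^ k * s i' := by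
    intro k
    have h : SemiconjBy (s i') p r := by
      simp [SemiconjBy, hp, hr, mul_assoc]
    exact (h.pow_right k)
  have hpr : p⁻¹ = r := by rw [hp, hr, mul_inv_rev, cs.inv_simple, cs.inv_simple]
  induction k with
  | zero => simp
  | succ k ih =>
    have hpk : (p ^ k)⁻¹ = r ^ k := by rw [← inv_pow, hpr]
    have hrk : (r ^ k)⁻¹ = p ^ k := by rw [← hpk, inv_inv]
    have e0 : r ^ k * s i' * p ^ k = r ^ (2*k) * s i' := by
      calc r ^ k * s i' * p ^ k = r ^ k * (s i' * p ^ k) := by rw [mul_assoc]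
        _ = r ^ k * (r ^ k * s i') := by rw [hsc k]
        _ = r ^ (2*k) * s i' := by rw [show 2*k = k+k by ring, pow_add]; simp [mul_assoc]
    have e1 : r ^ k * (s i' * s i * s i') * p ^ k = r ^ (2*k+1) * s i' := by
      calc r ^ k * (s i' * s i * s i') * p ^ k
          = r ^ k * (r * (s i' * p ^ k)) := by rw [hr]; simp [mul_assoc]
        _ = r ^ k * (r * (r ^ k * s i')) := by rw [hsc k]
        _ = r ^ (2*k+1) * s i' := by
            rw [show 2*k+1 = k + (1 + k) by ring, pow_add, pow_add, pow_one]
            simp [mul_assoc]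
    have hcond1 : (p ^ k * t * r ^ k = s i') ↔ t = r ^ (2*k) * s i' := by
      rw [key_iff, hpk, hrk, e0]
    have hcond2 : (s i' * (p ^ k * t * r ^ k) * s i' = s i) ↔ t = r ^ (2*k+1) * s i' := by
      rw [conj_eq_iff cs i' _ (s i), key_iff, hpk, hrk, e1]
    rw [pow_succ' (sigma cs i * sigma cs i') k]
    rw [Equiv.Perm.mul_apply, ih, Equiv.Perm.mul_apply]
    rw [sigma_apply, sigma_apply]
    simp only [Prod.mk.injEq]
    constructor
    · rw [pow_succ' p k, pow_succ r k, hp, hr]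
      simp [mul_assoc]
    · rw [show 2*(k+1) = 2*k+1+1 by ring, Finset.prod_range_succ, Finset.prod_range_succ]
      simp only [hcond1, hcond2]
      split_ifs <;> simp [mul_neg, neg_mul, neg_neg, mul_assoc, mul_comm, mul_left_comm]

private lemma sigma_liftable : M.IsLiftable (sigma cs) := by
  intro i i'
  refine Equiv.ext fun x => ?_
  obtain ⟨t, ε⟩ := x
  rw [Equiv.Perm.one_apply, sigma_iter, cs.simple_mul_simple_pow i i',
    cs.simple_mul_simple_pow' i i', one_mul, mul_one]
  have hprod : (∏ a ∈ Finset.range (2 * M i i'),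
      (if t = (s i' * s i) ^ a * s i' then (-1 : ℤˣ) else 1)) = 1 := by
    rw [two_mul, Finset.prod_range_add]
    have hQ : ∀ a : ℕ, (s i' * s i) ^ (M i i' + a) * s i' = (s i' * s i) ^ a * s i' := by
      intro a
      rw [pow_add, cs.simple_mul_simple_pow' i i', one_mul]
    have : ∀ a ∈ Finset.range (M i i'),
        (if t = (s i' * s i) ^ (M i i' + a) * s i' then (-1 : ℤˣ) else 1)
        = (if t = (s i' * s i) ^ a * s i' then (-1 : ℤˣ) else 1) := by
      intro a _
      rw [hQ a]
    rw [Finset.prod_congr rfl this, ← sq, Int.units_sq]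
  rw [hprod, mul_one]

/-- The sign representation `Φ : W →* Perm (W × ℤˣ)`. -/
noncomputable def Phi : W →* Equiv.Perm (W × ℤˣ) :=
  cs.lift ⟨sigma cs, sigma_liftable cs⟩

lemma Phi_simple (i : B) : Phi cs (s i) = sigma cs i :=
  cs.lift_apply_simple (sigma_liftable cs) i
lemma Phi_apply (w : W) : ∀ (t : W) (ε : ℤˣ),
    Phi cs w (t, ε) = (w * t * w⁻¹, ε * (Phi cs w (t, 1)).2) := by
  induction w using cs.simple_induction_left with
  | one => intro t ε; simp
  | mul_simple_left w i ih =>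
    intro t ε
    have h1 : Phi cs (s i * w) = Phi cs (s i) * Phi cs w := map_mul _ _ _
    rw [h1, Equiv.Perm.mul_apply, Equiv.Perm.mul_apply, ih t ε, ih t 1, Phi_simple,
      sigma_apply, sigma_apply]
    simp only [one_mul, Prod.mk.injEq]
    constructor
    · rw [mul_inv_rev, cs.inv_simple]; group
    · by_cases hc : w * t * w⁻¹ = s i <;> simp [hc, mul_neg]

/-- The sign `η(w,t)`. -/
noncomputable def eta (w t : W) : ℤˣ := (Phi cs w (t, 1)).2

lemma Phi_apply' (w t : W) (ε : ℤˣ) :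
    Phi cs w (t, ε) = (w * t * w⁻¹, ε * eta cs w t) := Phi_apply cs w t ε

@[simp] lemma eta_one (t : W) : eta cs 1 t = 1 := by simp [eta]

lemma eta_simple (i : B) (t : W) :
    eta cs (s i) t = if t = s i then -1 else 1 := by
  simp [eta, Phi_simple, sigma_apply]

lemma eta_mul (u v t : W) :
    eta cs (u * v) t = eta cs v t * eta cs u (v * t * v⁻¹) := by
  unfold eta
  rw [map_mul, Equiv.Perm.mul_apply, Phi_apply' cs v t 1, one_mul, Phi_apply']
  rfl

lemma eta_wordProd (ω : List B) (t : W) :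
    eta cs (π ω) t = (-1 : ℤˣ) ^ (List.count t (cs.rightInvSeq ω)) := by
  induction ω with
  | nil => simp
  | cons i ω ih =>
    rw [cs.wordProd_cons, eta_mul, ih, eta_simple]
    have hris : cs.rightInvSeq (i :: ω) = ((π ω)⁻¹ * s i * π ω) :: cs.rightInvSeq ω := rfl
    have hcond : ((π ω) * t * (π ω)⁻¹ = s i) ↔ t = (π ω)⁻¹ * s i * π ω := by
      rw [key_iff]; rw [inv_inv]
    rw [hris]
    by_cases h : t = (π ω)⁻¹ * s i * π ω
    · rw [if_pos (hcond.mpr h), ← h, List.count_cons_self, pow_succ]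
    · rw [if_neg (fun hh => h (hcond.mp hh)),
        List.count_cons_of_ne (fun hh => h hh.symm), mul_one]

lemma eta_refl_self {t : W} (ht : cs.IsReflection t) : eta cs t t = -1 := by
  obtain ⟨v, i, rfl⟩ := ht
  have h2 : v⁻¹ * (v * s i * v⁻¹) * v⁻¹⁻¹ = s i := by group
  have h1 : eta cs (v * s i * v⁻¹) (v * s i * v⁻¹) =
      eta cs v⁻¹ (v * s i * v⁻¹) * eta cs (v * s i) (s i) := by
    rw [eta_mul, h2]
  have h3 : eta cs (v * s i) (s i) = eta cs (s i) (s i) * eta cs v (s i * s i * (s i)⁻¹) := by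
    rw [← eta_mul]
  have h4 : s i * s i * (s i)⁻¹ = s i := by group
  have h5 : eta cs (s i) (s i) = -1 := by rw [eta_simple, if_pos rfl]
  have h6 : eta cs v⁻¹ (v * s i * v⁻¹) * eta cs v (s i) = 1 := by
    have h := eta_mul cs v v⁻¹ (v * s i * v⁻¹)
    rw [mul_inv_cancel, eta_one, h2] at h
    exact h.symm
  rw [h1, h3, h4, h5]
  calc eta cs v⁻¹ (v * s i * v⁻¹) * (-1 * eta cs v (s i))
      = -1 * (eta cs v⁻¹ (v * s i * v⁻¹) * eta cs v (s i)) := mul_left_comm _ _ _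
    _ = -1 := by rw [h6, mul_one]

lemma eta_eq_neg_one_iff {t : W} (ht : cs.IsReflection t) (w : W) :
    eta cs w t = -1 ↔ ℓ (w * t) < ℓ w := by
  constructor
  · intro h
    obtain ⟨ω, hred, rfl⟩ := cs.exists_reduced_word' w
    rw [eta_wordProd] at h
    have hmem : t ∈ cs.rightInvSeq ω := by
      by_contra hmem
      rw [List.count_eq_zero_of_not_mem hmem, pow_zero] at h
      exact absurd h (by decide)
    exact (cs.isRightInversion_of_mem_rightInvSeq hred hmem).2
  · intro h
    rcases Int.units_eq_one_or (eta cs w t) with h1 | h1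
    · exfalso
      have h2 : eta cs (w * t) t = -1 := by
        have htt : t * t * t⁻¹ = t := by rw [ht.mul_self, one_mul, ht.inv]
        rw [eta_mul, htt, eta_refl_self cs ht, h1, mul_one]
      obtain ⟨ω, hred, hw⟩ := cs.exists_reduced_word' (w * t)
      rw [hw, eta_wordProd] at h2
      have hmem : t ∈ cs.rightInvSeq ω := by
        by_contra hmem
        rw [List.count_eq_zero_of_not_mem hmem, pow_zero] at h2
        exact absurd h2 (by decide)
      have h3 := (cs.isRightInversion_of_mem_rightInvSeq hred hmem).2
      rw [← hw, mul_assoc, ht.mul_self, mul_one] at h3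
      omega
    · exact h1

section Counting

open scoped Classical in
/-- Number of right inversions (as reflections) of `w`. -/
noncomputable def nInv (w : W) : ℕ :=
  (Finset.univ.filter (fun t : W => cs.IsReflection t ∧ ℓ (w * t) < ℓ w)).card

open scoped Classical in
lemma nInv_eq_length (w : W) : nInv cs w = ℓ w := by
  obtain ⟨ω, hred, rfl⟩ := cs.exists_reduced_word' w
  have hset : Finset.univ.filter
      (fun t : W => cs.IsReflection t ∧ ℓ (π ω * t) < ℓ (π ω)) = (cs.rightInvSeq ω).toFinset := by
    ext t
    simp only [Finset.mem_filter, Finset.mem_univ, true_and, List.mem_toFinset]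
    constructor
    · rintro ⟨hrefl, hlen⟩
      have h := (eta_eq_neg_one_iff cs hrefl (π ω)).mpr hlen
      rw [eta_wordProd] at h
      by_contra hmem
      rw [List.count_eq_zero_of_not_mem hmem, pow_zero] at h
      exact absurd h (by decide)
    · intro hmem
      exact ⟨cs.isReflection_of_mem_rightInvSeq ω hmem,
        (cs.isRightInversion_of_mem_rightInvSeq hred hmem).2⟩
  rw [nInv, hset, List.toFinset_card_of_nodup (hred.nodup_rightInvSeq),
    cs.length_rightInvSeq, hred]

open scoped Classical in
lemma length_longest_mul (w₀ : W) (hw₀ : ∀ w : W, ℓ w ≤ ℓ w₀) (u : W) :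
    ℓ (w₀ * u) + ℓ u = ℓ w₀ := by
  have heta : ∀ t : W, cs.IsReflection t → eta cs w₀ t = -1 := by
    intro t ht
    exact (eta_eq_neg_one_iff cs ht w₀).mpr
      (lt_of_le_of_ne (hw₀ _) (ht.length_mul_left_ne w₀))
  have hsub : Finset.univ.filter (fun t : W => cs.IsReflection t ∧ ℓ (u * t) < ℓ u)
      ⊆ Finset.univ.filter (fun t : W => cs.IsReflection t) := by
    intro t ht
    simp only [Finset.mem_filter] at *
    tauto
  have hflip : Finset.univ.filter
      (fun t : W => cs.IsReflection t ∧ ℓ ((w₀ * u) * t) < ℓ (w₀ * u)) =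
      Finset.univ.filter (fun t : W => cs.IsReflection t) \
        Finset.univ.filter (fun t : W => cs.IsReflection t ∧ ℓ (u * t) < ℓ u) := by
    ext t
    simp only [Finset.mem_filter, Finset.mem_univ, true_and, Finset.mem_sdiff]
    constructor
    · rintro ⟨hrefl, hlen⟩
      refine ⟨hrefl, fun hc => ?_⟩
      have h1 := (eta_eq_neg_one_iff cs hrefl (w₀ * u)).mpr hlen
      have h2 := (eta_eq_neg_one_iff cs hrefl u).mpr hc.2
      rw [eta_mul, h2, heta _ (hrefl.conj u)] at h1
      exact absurd h1 (by decide)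
    · rintro ⟨hrefl, hc⟩
      refine ⟨hrefl, ?_⟩
      rw [← eta_eq_neg_one_iff cs hrefl, eta_mul, heta _ (hrefl.conj u)]
      rcases Int.units_eq_one_or (eta cs u t) with h1 | h1
      · rw [h1, one_mul]
      · exact absurd ((eta_eq_neg_one_iff cs hrefl u).mp h1) (fun hh => hc ⟨hrefl, hh⟩)
  have hN : ℓ w₀ = (Finset.univ.filter (fun t : W => cs.IsReflection t)).card := by
    have h1 := nInv_eq_length cs w₀
    rw [nInv] at h1
    rw [← h1]
    congr 1
    ext t
    simp only [Finset.mem_filter, Finset.mem_univ, true_and, and_iff_left_iff_imp]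
    intro ht
    exact lt_of_le_of_ne (hw₀ _) (ht.length_mul_left_ne w₀)
  have h2 := nInv_eq_length cs (w₀ * u)
  have h3 := nInv_eq_length cs u
  rw [nInv, hflip, Finset.card_sdiff_of_subset hsub] at h2
  rw [nInv] at h3
  have hle := Finset.card_le_card hsub
  omega
end Counting

lemma descent_flip (w₀ : W) (hw₀ : ∀ w : W, ℓ w ≤ ℓ w₀) (u : W) (i : B) :
    ℓ (w₀ * u * s i) < ℓ (w₀ * u) ↔ ℓ u < ℓ (u * s i) := by
  have h1 := length_longest_mul cs w₀ hw₀ (u * s i)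
  have h2 := length_longest_mul cs w₀ hw₀ u
  have h3 := cs.length_mul_simple_ne u i
  rw [← mul_assoc] at h1
  omega

lemma sum_powerset_pow (x : ℚ) (T : Finset B) : ∀ n : ℕ, T.card ≤ n →
    ∑ K ∈ T.powerset, x ^ (n - K.card) = x ^ (n - T.card) * (1 + x) ^ T.card := by
  induction T using Finset.induction_on with
  | empty => intro n _; simp
  | @insert a T ha ih =>
    intro n hn
    rw [Finset.card_insert_of_notMem ha] at hn ⊢
    have hdisj : Disjoint T.powerset (T.powerset.image (insert a)) := by
      rw [Finset.disjoint_left]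
      intro K hK hK'
      rw [Finset.mem_powerset] at hK
      obtain ⟨K', hK', rfl⟩ := Finset.mem_image.mp hK'
      exact ha (hK (Finset.mem_insert_self a K'))
    have hinj : ∀ K ∈ T.powerset, ∀ K' ∈ T.powerset, insert a K = insert a K' → K = K' := by
      intro K hK K' hK' h
      rw [Finset.mem_powerset] at hK hK'
      have e1 : K = (insert a K).erase a := (Finset.erase_insert (fun hh => ha (hK hh))).symm
      have e2 : K' = (insert a K').erase a := (Finset.erase_insert (fun hh => ha (hK' hh))).symm
      rw [e1, e2, h]
    rw [Finset.powerset_insert, Finset.sum_union hdisj, Finset.sum_image hinj]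
    have hcongr : ∀ K ∈ T.powerset, x ^ (n - (insert a K).card) = x ^ ((n-1) - K.card) := by
      intro K hK
      rw [Finset.mem_powerset] at hK
      have hak : a ∉ K := fun hh => ha (hK hh)
      rw [Finset.card_insert_of_notMem hak]
      congr 1
      omega
    rw [Finset.sum_congr rfl hcongr, ih n (by omega), ih (n-1) (by omega)]
    have he1 : n - T.card = ((n-1) - T.card) + 1 := by omega
    have he2 : n - (T.card + 1) = (n-1) - T.card := by omega
    rw [he1, he2, pow_succ, pow_succ]
    ring

lemma descentBasis'_eq (I : Finset B) :
    descentBasis' cs I = ∑ w : W,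
      (((2:ℚ)⁻¹) ^ I.card * (-1) ^ ((I.filter (fun i => ℓ (w * s i) < ℓ w)).card)) •
        MonoidAlgebra.single w (1:ℚ) := by
  classical
  unfold descentBasis' descentBasis
  have h1 : ∀ K ∈ I.powerset, ((-(2:ℚ)⁻¹) ^ (I.card - K.card)) •
      (∑ w : W, if ∀ i ∈ K, ℓ w < ℓ (w * s i) then MonoidAlgebra.single w (1:ℚ) else 0) =
      ∑ w : W, (if ∀ i ∈ K, ℓ w < ℓ (w * s i)
        then ((-(2:ℚ)⁻¹) ^ (I.card - K.card)) • MonoidAlgebra.single w (1:ℚ) else 0) := by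
    intro K _
    rw [Finset.smul_sum]
    refine Finset.sum_congr rfl (fun w _ => ?_)
    split <;> simp
  rw [Finset.sum_congr rfl h1, Finset.sum_comm]
  refine Finset.sum_congr rfl (fun w _ => ?_)
  rw [← Finset.sum_filter]
  have hps : I.powerset.filter (fun K => ∀ i ∈ K, ℓ w < ℓ (w * s i)) =
      (I.filter (fun i => ℓ w < ℓ (w * s i))).powerset := by
    ext K
    simp only [Finset.mem_filter, Finset.mem_powerset]
    constructor
    · rintro ⟨hKI, hKc⟩ i hi
      exact Finset.mem_filter.mpr ⟨hKI hi, hKc i hi⟩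
    · intro h
      refine ⟨fun i hi => (Finset.mem_filter.mp (h hi)).1,
        fun i hi => (Finset.mem_filter.mp (h hi)).2⟩
  rw [hps, ← Finset.sum_smul]
  set T := I.filter (fun i => ℓ w < ℓ (w * s i)) with hT
  have hTle : T.card ≤ I.card := Finset.card_le_card (Finset.filter_subset _ _)
  rw [sum_powerset_pow (-(2:ℚ)⁻¹) T I.card hTle]
  have hd : (I.filter (fun i => ℓ (w * s i) < ℓ w)).card = I.card - T.card := by
    have hcompl : I.filter (fun i => ℓ (w * s i) < ℓ w) =
        I.filter (fun i => ¬ (ℓ w < ℓ (w * s i))) := by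
      refine Finset.filter_congr (fun i _ => ?_)
      have := cs.length_mul_simple_ne w i
      constructor <;> intro <;> omega
    rw [hcompl]
    have h : (I.filter (fun i => ℓ w < ℓ (w * s i))).card +
        (I.filter (fun i => ¬ (ℓ w < ℓ (w * s i)))).card = I.card :=
      Finset.card_filter_add_card_filter_not _
    have hTcard : T.card = (I.filter (fun i => ℓ w < ℓ (w * s i))).card := rfl
    omega
  rw [hd]
  have h12 : (1 + -(2:ℚ)⁻¹) = 2⁻¹ := by norm_num
  rw [h12, neg_pow, mul_assoc, ← pow_add, Nat.sub_add_cancel hTle, mul_comm]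

end Auxiliary

set_option synthInstance.maxHeartbeats 1000000 in
set_option maxHeartbeats 1000000 in
/-- In the descent algebra, `w₀ · x′_I = (−1)^{|I|} x′_I` for every `I ⊆ S`, where
`w₀` is the longest element of `W` and `x′_I = Σ_{K⊆I} (−1/2)^{|I|−|K|} x_K`. -/
theorem longestElement_mul_descentBasis' {M : CoxeterMatrix B}
    (cs : CoxeterSystem M W) (w₀ : W) (hw₀ : ∀ w : W, cs.length w ≤ cs.length w₀) :
    ∀ I : Finset B,
      MonoidAlgebra.single w₀ (1 : ℚ) * descentBasis' cs I =
        ((-1 : ℚ)) ^ I.card • descentBasis' cs I := by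
  intro I
  classical
  rw [descentBasis'_eq cs I, Finset.mul_sum, Finset.smul_sum]
  have hstep1 : ∀ w : W, (MonoidAlgebra.single w₀ (1:ℚ)) *
      ((((2:ℚ)⁻¹) ^ I.card *
        (-1) ^ ((I.filter (fun i => cs.length (w * cs.simple i) < cs.length w)).card)) •
          MonoidAlgebra.single w (1:ℚ)) =
      (((2:ℚ)⁻¹) ^ I.card *
        (-1) ^ ((I.filter (fun i => cs.length (w * cs.simple i) < cs.length w)).card)) •
          MonoidAlgebra.single (w₀ * w) (1:ℚ) := by
    intro w
    rw [mul_smul_comm, MonoidAlgebra.single_mul_single, one_mul]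
  have e1 : (∑ w : W, (MonoidAlgebra.single w₀ (1:ℚ)) *
      ((((2:ℚ)⁻¹) ^ I.card *
        (-1) ^ ((I.filter (fun i => cs.length (w * cs.simple i) < cs.length w)).card)) •
          MonoidAlgebra.single w (1:ℚ))) =
      ∑ w : W, (((2:ℚ)⁻¹) ^ I.card *
        (-1) ^ ((I.filter (fun i => cs.length (w * cs.simple i) < cs.length w)).card)) •
          MonoidAlgebra.single (w₀ * w) (1:ℚ) :=
    Finset.sum_congr rfl (fun w _ => hstep1 w)
  rw [e1]
  have hbij := Fintype.sum_bijective (fun w : W => w₀ * w) (Group.mulLeft_bijective w₀)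
      (fun w : W => ((-1:ℚ)) ^ I.card • ((((2:ℚ)⁻¹) ^ I.card *
        (-1) ^ ((I.filter (fun i =>
          cs.length ((w₀ * w) * cs.simple i) < cs.length (w₀ * w))).card)) •
          MonoidAlgebra.single (w₀ * w) (1:ℚ)))
      (fun v : W => ((-1:ℚ)) ^ I.card • ((((2:ℚ)⁻¹) ^ I.card *
        (-1) ^ ((I.filter (fun i => cs.length (v * cs.simple i) < cs.length v)).card)) •
          MonoidAlgebra.single v (1:ℚ)))
      (fun w => rfl)
  rw [← hbij]
  refine Finset.sum_congr rfl (fun w _ => ?_)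
  beta_reduce
  rw [smul_smul]
  congr 1
  have hdflip : (I.filter (fun i =>
      cs.length ((w₀ * w) * cs.simple i) < cs.length (w₀ * w))).card =
      I.card - (I.filter (fun i => cs.length (w * cs.simple i) < cs.length w)).card := by
    have hf1 : I.filter (fun i =>
        cs.length ((w₀ * w) * cs.simple i) < cs.length (w₀ * w)) =
        I.filter (fun i => cs.length w < cs.length (w * cs.simple i)) :=
      Finset.filter_congr (fun i _ => descent_flip cs w₀ hw₀ w i)
    have hf2 : I.filter (fun i => cs.length (w * cs.simple i) < cs.length w) =
        I.filter (fun i => ¬ (cs.length w < cs.length (w * cs.simple i))) :=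
      Finset.filter_congr (fun i _ => by
        have := cs.length_mul_simple_ne w i
        constructor <;> intro <;> omega)
    have h3 : (I.filter (fun i => cs.length w < cs.length (w * cs.simple i))).card +
        (I.filter (fun i => ¬ (cs.length w < cs.length (w * cs.simple i)))).card = I.card :=
      Finset.card_filter_add_card_filter_not _
    rw [hf1, hf2]
    omega
  set d := (I.filter (fun i => cs.length (w * cs.simple i) < cs.length w)).card with hd
  have hdle : d ≤ I.card := Finset.card_le_card (Finset.filter_subset _ _)
  rw [hdflip]
  have key : ((-1:ℚ))^d = (-1)^I.card * (-1)^(I.card - d) := by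
    have k1 : ((-1:ℚ))^I.card = (-1)^d * (-1)^(I.card - d) := by
      rw [← pow_add, Nat.add_sub_cancel' hdle]
    have k2 : ((-1:ℚ))^(I.card - d) * (-1)^(I.card - d) = 1 := by
      rw [← pow_add]
      exact Even.neg_one_pow ⟨I.card - d, rfl⟩
    rw [k1, mul_assoc, k2, mul_one]
  rw [key]
  ring
end

section
/- Let (W,S) be a finite Coxeter system. If F is a saturated subset of P(S) (i.e., I ∈ F and I′ ⊆ I imply I′ ∈ F), then Σ_F(W) = ⊕_{I∈F} Q x_I is a left ideal of Σ(W), and the character of the left Σ(W)-module Σ_F(W) is Σ_{I∈F} τ_{λ(I)}. -/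
open Real
set_option linter.unusedSectionVars false

namespace SolomonAux

variable {B : Type*} [DecidableEq B] [Fintype B]

/-- The cosine matrix of a Coxeter matrix. -/
noncomputable def kf (M : CoxeterMatrix B) (i j : B) : ℝ := -Real.cos (π / M i j)

lemma kf_diag (M : CoxeterMatrix B) (i : B) : kf M i i = 1 := by
  simp [kf, M.diagonal i, Real.cos_pi]

lemma kf_symm (M : CoxeterMatrix B) (i j : B) : kf M i j = kf M j i := by
  simp [kf, M.symmetric i j]

/-- The linear functional `v ↦ B(α_i, v)`. -/
noncomputable def Sf (M : CoxeterMatrix B) (i : B) : (B → ℝ) →ₗ[ℝ] ℝ :=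
  ∑ q : B, kf M i q • (LinearMap.proj q : (B → ℝ) →ₗ[ℝ] ℝ)

lemma Sf_apply (M : CoxeterMatrix B) (i : B) (v : B → ℝ) :
    Sf M i v = ∑ q : B, kf M i q * v q := by
  simp [Sf]

/-- simple root -/
noncomputable def av (i : B) : B → ℝ := Pi.single i 1

lemma Sf_av (M : CoxeterMatrix B) (i j : B) : Sf M i (av j) = kf M i j := by
  rw [Sf_apply]
  rw [Finset.sum_eq_single j]
  · simp [av]
  · intro q _ hq; simp [av, Pi.single_apply, hq]
  · simp

/-- The geometric reflection associated to `i`. -/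
noncomputable def sigma (M : CoxeterMatrix B) (i : B) : Module.End ℝ (B → ℝ) :=
  LinearMap.id - ((2:ℝ) • Sf M i).smulRight (av i)

lemma sigma_apply (M : CoxeterMatrix B) (i : B) (v : B → ℝ) :
    sigma M i v = v - (2 * Sf M i v) • av i := by
  simp [sigma, smul_smul]

lemma sigma_sq (M : CoxeterMatrix B) (i : B) : sigma M i * sigma M i = 1 := by
  apply LinearMap.ext; intro v
  rw [Module.End.mul_apply, sigma_apply, sigma_apply, map_sub, map_smul, Sf_av, kf_diag,
    smul_eq_mul, mul_one, Module.End.one_apply]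
  module

end SolomonAux

namespace SolomonAux

variable {B : Type*} [DecidableEq B] [Fintype B]

/-- The 2-plane action of `σ_i σ_j` in coordinates. -/
def T2 (c : ℝ) (p : ℝ × ℝ) : ℝ × ℝ := ((4*c^2-1)*p.1 + 2*c*p.2, -(2*c*p.1) - p.2)

lemma T2_rec (c : ℝ) (q : ℝ × ℝ) : T2 c (T2 c q) = (4*c^2-2) • (T2 c q) - q := by
  simp only [T2, Prod.smul_mk, smul_eq_mul, Prod.mk_sub_mk]
  rw [Prod.ext_iff]
  constructor <;> simp <;> ring

lemma sin_rec (a b : ℝ) : Real.sin (a + b) = 2 * Real.cos b * Real.sin a - Real.sin (a - b) := by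
  rw [Real.sin_add, Real.sin_sub]; ring

/-- Chebyshev-type closed form for iterates of `T2 c` when `c = -cos θ`. -/
lemma T2_iterate (θ : ℝ) (p : ℝ × ℝ) (r : ℕ) :
    Real.sin (2*θ) • (T2 (-Real.cos θ))^[r] p =
      Real.sin (2*r*θ) • (T2 (-Real.cos θ) p) - Real.sin (2*r*θ - 2*θ) • p := by
  set c := -Real.cos θ with hc
  have htr : 4*c^2-2 = 2 * Real.cos (2*θ) := by
    rw [Real.cos_two_mul]; rw [hc]; ring
  induction r using Nat.twoStepInduction with
  | zero => simp [Real.sin_neg]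
  | one => norm_num
  | more r ih1 ih2 =>
    have hiter : (T2 c)^[r+2] p = (4*c^2-2) • (T2 c)^[r+1] p - (T2 c)^[r] p := by
      rw [Function.iterate_succ_apply', Function.iterate_succ_apply' (T2 c) r p]
      generalize (T2 c)^[r] p = q
      exact T2_rec c q
    rw [hiter, smul_sub, smul_comm, ih2, ih1]
    have h1 : Real.sin (2*(r+2:ℕ)*θ) = 2*Real.cos (2*θ) * Real.sin (2*(r+1:ℕ)*θ)
        - Real.sin (2*(r:ℕ)*θ) := by
      push_cast
      have := sin_rec (2*((r:ℝ)+1)*θ) (2*θ)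
      rw [show 2*((r:ℝ)+1)*θ + 2*θ = 2*((r:ℝ)+2)*θ by ring,
        show 2*((r:ℝ)+1)*θ - 2*θ = 2*(r:ℝ)*θ by ring] at this
      exact this
    have h2 : Real.sin (2*(r+2:ℕ)*θ - 2*θ) = 2*Real.cos (2*θ) * Real.sin (2*(r+1:ℕ)*θ - 2*θ)
        - Real.sin (2*(r:ℕ)*θ - 2*θ) := by
      push_cast
      have := sin_rec (2*(r:ℝ)*θ) (2*θ)
      rw [show 2*(r:ℝ)*θ + 2*θ = 2*((r:ℝ)+2)*θ - 2*θ by ring] at this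
      rw [show 2*((r:ℝ)+1)*θ - 2*θ = 2*(r:ℝ)*θ by ring]
      exact this
    rw [htr, h1, h2]
    ext <;> simp only [Prod.fst_sub, Prod.snd_sub, Prod.smul_fst, Prod.smul_snd,
      smul_eq_mul] <;> ring

/-- For `m ≥ 2` and `θ = π / m`, the `m`-th iterate of `T2 (-cos θ)` is the identity. -/
lemma T2_iterate_eq_id {m : ℕ} (hm : 2 ≤ m) (p : ℝ × ℝ) :
    (T2 (-Real.cos (π / m)))^[m] p = p := by
  rcases eq_or_lt_of_le hm with h2 | h3
  · subst h2
    simp only [Function.iterate_succ, Function.iterate_zero, Function.comp_apply, id_eq]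
    norm_num [T2]
  · -- m ≥ 3
    set θ := π / m with hθ
    have hmR : (0:ℝ) < m := by positivity
    have h2θ : 2*θ = 2*π/m := by rw [hθ]; ring
    have h2θpos : 0 < 2*θ := by rw [h2θ]; positivity
    have h2θlt : 2*θ < π := by
      rw [h2θ, div_lt_iff₀ hmR]
      have : (3:ℝ) ≤ m := by exact_mod_cast h3
      nlinarith [Real.pi_pos]
    have hs : Real.sin (2*θ) ≠ 0 := (Real.sin_pos_of_pos_of_lt_pi h2θpos h2θlt).ne'
    have key := T2_iterate θ p m
    have hmθ : 2*(m:ℝ)*θ = 2*π := by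
      rw [hθ]; field_simp
    rw [hmθ, Real.sin_two_pi, show 2*π - 2*θ = -(2*θ - 2*π) by ring, Real.sin_neg,
      ← Real.sin_sub_two_pi] at key
    simp only [zero_smul, Real.sin_sub_two_pi, neg_neg, zero_sub, neg_neg] at key
    -- key : sin (2θ) • iterate = -(-(sin(2θ)) • p) or so; normalize
    have : Real.sin (2*θ) • (T2 (-Real.cos θ))^[m] p = Real.sin (2*θ) • p := by
      rw [key]; module
    exact smul_right_injective _ hs this

end SolomonAux

namespace SolomonAux

variable {B : Type*} [DecidableEq B] [Fintype B]

lemma sigma_plane (M : CoxeterMatrix B) (i j : B) (x y : ℝ) (w : B → ℝ)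
    (hwi : Sf M i w = 0) (hwj : Sf M j w = 0) :
    (sigma M i * sigma M j) (x • av i + y • av j + w) =
      (T2 (kf M i j) (x, y)).1 • av i + (T2 (kf M i j) (x, y)).2 • av j + w := by
  set c := kf M i j with hc
  have hji : kf M j i = c := by rw [hc, kf_symm]
  have e1 : sigma M j (x • av i + y • av j + w)
      = x • av i + (-(2*c*x) - y) • av j + w := by
    rw [sigma_apply, map_add, map_add, map_smul, map_smul, Sf_av, Sf_av, kf_diag, hji, hwj]
    simp only [smul_eq_mul, mul_one, add_zero]
    module
  rw [Module.End.mul_apply, e1, sigma_apply, map_add, map_add, map_smul, map_smul,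
    Sf_av, Sf_av, kf_diag, hwi, ← hc]
  simp only [T2, smul_eq_mul, mul_one, add_zero]
  module

lemma sigma_pow_plane (M : CoxeterMatrix B) (i j : B) (x y : ℝ) (w : B → ℝ)
    (hwi : Sf M i w = 0) (hwj : Sf M j w = 0) (r : ℕ) :
    ((sigma M i * sigma M j)^r) (x • av i + y • av j + w) =
      ((T2 (kf M i j))^[r] (x, y)).1 • av i + ((T2 (kf M i j))^[r] (x, y)).2 • av j + w := by
  induction r generalizing x y with
  | zero => simp
  | succ r ih =>
    rw [pow_succ, Module.End.mul_apply, sigma_plane M i j x y w hwi hwj,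
      ih (T2 (kf M i j) (x, y)).1 (T2 (kf M i j) (x, y)).2,
      ← Function.iterate_succ_apply]

end SolomonAux

namespace SolomonAux

variable {B : Type*} [DecidableEq B] [Fintype B]

lemma kf_sq_lt_one (M : CoxeterMatrix B) {i j : B} (hij : i ≠ j) (hm : M i j ≠ 0) :
    (kf M i j)^2 < 1 := by
  have hm2 : 2 ≤ M i j := by
    rcases Nat.lt_or_ge (M i j) 2 with h | h
    · interval_cases h' : M i j <;> simp_all [M.off_diagonal i j hij]
    · exact h
  have hmR : (2:ℝ) ≤ (M i j : ℝ) := by exact_mod_cast hm2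
  have h1 : 0 < π / (M i j : ℝ) := by positivity
  have h2 : π / (M i j : ℝ) < π := by
    rw [div_lt_iff₀ (by linarith)]
    nlinarith [Real.pi_pos]
  have hs := Real.sin_pos_of_pos_of_lt_pi h1 h2
  have := Real.sin_sq_add_cos_sq (π / (M i j : ℝ))
  have : (kf M i j)^2 = 1 - (Real.sin (π / (M i j : ℝ)))^2 := by
    rw [kf, neg_pow]; nlinarith
  nlinarith

lemma sigma_liftable (M : CoxeterMatrix B) : CoxeterMatrix.IsLiftable M (sigma M) := by
  intro i j
  by_cases hij : i = j
  · subst hij; rw [M.diagonal i, pow_one, sigma_sq]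
  by_cases hm : M i j = 0
  · rw [hm, pow_zero]
  have hm2 : 2 ≤ M i j := by
    rcases Nat.lt_or_ge (M i j) 2 with h | h
    · interval_cases h' : M i j <;> simp_all [M.off_diagonal i j hij]
    · exact h
  apply LinearMap.ext; intro v
  set c := kf M i j with hc
  have hd : 1 - c^2 ≠ 0 := by have := kf_sq_lt_one M hij hm; intro h; nlinarith
  set a := Sf M i v with ha
  set b := Sf M j v with hb
  set x := (a - c*b)/(1 - c^2) with hx
  set y := (b - c*a)/(1 - c^2) with hy
  set w := v - x • av i - y • av j with hw
  have hwi : Sf M i w = 0 := by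
    rw [hw, map_sub, map_sub, map_smul, map_smul, Sf_av, Sf_av, kf_diag, ← hc,
      smul_eq_mul, smul_eq_mul, ← ha, hx, hy]
    field_simp
    ring
  have hwj : Sf M j w = 0 := by
    rw [hw, map_sub, map_sub, map_smul, map_smul, Sf_av, Sf_av, kf_diag, kf_symm, ← hc,
      smul_eq_mul, smul_eq_mul, ← hb, hx, hy]
    field_simp
    ring
  have hv : v = x • av i + y • av j + w := by rw [hw]; module
  rw [Module.End.one_apply, hv, sigma_pow_plane M i j x y w hwi hwj,
    show kf M i j = -Real.cos (π / (M i j : ℝ)) from rfl, T2_iterate_eq_id hm2 (x, y)]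

lemma sigma_ne (M : CoxeterMatrix B) {i j : B} (hij : i ≠ j) : sigma M i ≠ sigma M j := by
  intro h
  have h2 := congrArg (fun f : Module.End ℝ (B → ℝ) => f (av i) i) h
  simp only [sigma_apply, Sf_av, kf_diag] at h2
  rw [kf_symm] at h2
  simp only [Pi.sub_apply, Pi.smul_apply, av, Pi.single_apply, if_true,
    if_neg (Ne.symm hij)] at h2
  rw [if_neg hij] at h2
  norm_num at h2

variable {W : Type*} [Group W] {M : CoxeterMatrix B}

lemma simple_injective (cs : CoxeterSystem M W) : Function.Injective cs.simple := by
  intro i j h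
  by_contra hij
  apply sigma_ne M hij
  have := congrArg (cs.lift ⟨sigma M, sigma_liftable M⟩) h
  rwa [CoxeterSystem.lift_apply_simple, CoxeterSystem.lift_apply_simple] at this

end SolomonAux

set_option linter.unusedSectionVars false

namespace SolomonAux

variable {B W : Type*} [DecidableEq B] [DecidableEq W] [Group W] {M : CoxeterMatrix B}
  (cs : CoxeterSystem M W)

local prefix:100 "s" => cs.simple
local prefix:100 "π" => cs.wordProd
local prefix:100 "ℓ" => cs.length

lemma fmu_involutive (i : B) : Function.Involutive
    (fun p : W × ℤˣ => (s i * p.1 * s i, if p.1 = s i then -p.2 else p.2)) := by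
  rintro ⟨t, ε⟩
  have h1 : s i * (s i * t * s i) * s i = t := by
    rw [← mul_assoc, ← mul_assoc, cs.simple_mul_simple_self, one_mul, mul_assoc,
      cs.simple_mul_simple_self, mul_one]
  have h2 : (s i * t * s i = s i) ↔ (t = s i) := by
    constructor
    · intro h
      have := congrArg (fun z => s i * z * s i) h
      simpa [h1, ← mul_assoc, cs.simple_mul_simple_self] using this
    · rintro rfl; rw [cs.simple_mul_simple_self, one_mul]
  simp only [h1, h2]
  by_cases ht : t = s i <;> simp [ht]

/-- The sign permutation associated to a simple reflection. -/
def fmu (i : B) : Equiv.Perm (W × ℤˣ) := (fmu_involutive cs i).toPerm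

lemma fmu_apply (i : B) (t : W) (ε : ℤˣ) :
    fmu cs i (t, ε) = (s i * t * s i, if t = s i then -ε else ε) := rfl

lemma conj_simple_pow (i j : B) (r : ℕ) :
    s j * (s i * s j)^r * s j = ((s i * s j)^r)⁻¹ := by
  have h : s j * (s i * s j) * (s j)⁻¹ = (s i * s j)⁻¹ := by
    rw [cs.inv_simple, mul_inv_rev, cs.inv_simple, cs.inv_simple, ← mul_assoc, mul_assoc,
      cs.simple_mul_simple_self, mul_one]
  calc s j * (s i * s j)^r * s j = s j * (s i * s j)^r * (s j)⁻¹ := by rw [cs.inv_simple]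
  _ = (s j * (s i * s j) * (s j)⁻¹)^r := (conj_pow ..).symm
  _ = ((s i * s j)^r)⁻¹ := by rw [h, inv_pow]

lemma conj_pow_aux {G : Type*} [Group G] {g x : G} (h : x * g = g⁻¹ * x) (k : ℕ) :
    x * g ^ k = (g ^ k)⁻¹ * x := by
  induction k with
  | zero => simp
  | succ k ih =>
    rw [pow_succ, ← mul_assoc, ih, mul_assoc, h]
    group

lemma e2_aux {G : Type*} [Group G] {g x : G} (h : x * g = g⁻¹ * x) (k : ℕ) :
    (g^k)⁻¹ * x * g^k = (g^(2*k))⁻¹ * x := by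
  rw [mul_assoc, conj_pow_aux h]
  group

lemma e3_aux {G : Type*} [Group G] {g x : G} (h : x * g = g⁻¹ * x) (k : ℕ) :
    (g^k)⁻¹ * (g⁻¹ * x) * g^k = (g^(2*k+1))⁻¹ * x := by
  rw [mul_assoc, mul_assoc, conj_pow_aux h]
  group

lemma fmu_mul_pow_apply (i j : B) (r : ℕ) (t : W) (ε : ℤˣ) :
    ((fmu cs i * fmu cs j)^r) (t, ε) =
      ((s i * s j)^r * t * ((s i * s j)^r)⁻¹,
       (∏ n ∈ Finset.range (2*r), (if t = ((s i * s j)^n)⁻¹ * s j then (-1:ℤˣ) else 1)) * ε) := by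
  set a := s i * s j with ha
  clear_value a
  have hainv : a⁻¹ = s j * s i := by
    rw [ha, mul_inv_rev, cs.inv_simple, cs.inv_simple]
  have hconj1 : s j * a = a⁻¹ * s j := by
    rw [hainv, ha, mul_assoc]
  have hsis : s j * s i * s j = a⁻¹ * s j := by
    rw [hainv, mul_assoc]
  have key : ∀ (k : ℕ), a^k * t * (a^k)⁻¹ = s j ↔ t = (a^(2*k))⁻¹ * s j := by
    intro k
    have e2 := e2_aux hconj1 k
    constructor
    · intro h
      have ht : t = (a^k)⁻¹ * s j * a^k := by rw [← h]; group
      rw [ht, e2]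
    · intro h
      rw [h, ← e2]; group
  have key2 : ∀ (k : ℕ), s j * (a^k * t * (a^k)⁻¹) * s j = s i ↔
      t = (a^(2*k+1))⁻¹ * s j := by
    intro k
    have hcanc : ∀ z : W, s j * (s j * z * s j) * s j = z := by
      intro z
      rw [← mul_assoc, ← mul_assoc, cs.simple_mul_simple_self, one_mul, mul_assoc,
        cs.simple_mul_simple_self, mul_one]
    have hrw : s j * (a^k * t * (a^k)⁻¹) * s j = s i ↔
        a^k * t * (a^k)⁻¹ = s j * s i * s j := by
      constructor
      · intro h
        have h' := congrArg (fun z => s j * z * s j) h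
        rw [hcanc] at h'
        exact h'
      · intro h
        rw [h, hcanc]
    have e3 := e3_aux hconj1 k
    rw [hrw, hsis]
    constructor
    · intro h
      have ht : t = (a^k)⁻¹ * (a⁻¹ * s j) * a^k := by rw [← h]; group
      rw [ht, e3]
    · intro h
      rw [h, ← e3]; group
  induction r with
  | zero => simp
  | succ r ih =>
    rw [pow_succ', Equiv.Perm.mul_apply, ih, Equiv.Perm.mul_apply, fmu_apply, fmu_apply]
    rw [show 2*(r+1) = (2*r) + 1 + 1 by ring, Finset.prod_range_succ, Finset.prod_range_succ]
    have hfst : s i * (s j * (a ^ r * t * (a ^ r)⁻¹) * s j) * s i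
        = a^(r+1) * t * (a^(r+1))⁻¹ := by
      rw [pow_succ', mul_inv_rev, hainv, ha]
      group
    rw [Prod.ext_iff]
    refine ⟨hfst, ?_⟩
    simp only
    simp only [← key r, ← key2 r]
    split_ifs <;> simp [mul_comm, mul_left_comm, mul_assoc]

lemma fmu_liftable : CoxeterMatrix.IsLiftable M (fmu cs) := by
  intro i j
  rcases Nat.eq_zero_or_pos (M i j) with hm | hm
  · rw [hm, pow_zero]
  apply Equiv.ext
  rintro ⟨t, ε⟩
  rw [fmu_mul_pow_apply, cs.simple_mul_simple_pow i j]
  simp only [one_mul, inv_one, mul_one, Equiv.Perm.one_apply]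
  rw [show 2 * M i j = M i j + M i j by ring, Finset.prod_range_add]
  have heq : ∀ n ∈ Finset.range (M i j),
      (if t = ((s i * s j)^(M i j + n))⁻¹ * s j then (-1:ℤˣ) else 1) =
      (if t = ((s i * s j)^n)⁻¹ * s j then (-1:ℤˣ) else 1) := by
    intro n _
    rw [pow_add, cs.simple_mul_simple_pow i j, one_mul]
  rw [Finset.prod_congr rfl heq]
  rw [Prod.ext_iff]
  refine ⟨rfl, ?_⟩
  simp only
  rw [← pow_two, Int.units_sq, one_mul]

/-- The sign representation of the Coxeter group on `W × ℤˣ`. -/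
noncomputable def mus : W →* Equiv.Perm (W × ℤˣ) := cs.lift ⟨fmu cs, fmu_liftable cs⟩

lemma mus_simple (i : B) : mus cs (s i) = fmu cs i :=
  cs.lift_apply_simple (fmu_liftable cs) i

lemma mus_wordProd (ω : List B) (t : W) (ε : ℤˣ) :
    mus cs (π ω) (t, ε) =
      (π ω * t * (π ω)⁻¹, (-1:ℤˣ)^(List.count t (cs.rightInvSeq ω)) * ε) := by
  induction ω generalizing t ε with
  | nil => simp
  | cons i ω ih =>
    rw [cs.wordProd_cons, map_mul, Equiv.Perm.mul_apply, ih, mus_simple, fmu_apply]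
    have hcond : (π ω * t * (π ω)⁻¹ = s i) ↔ ((π ω)⁻¹ * s i * π ω = t) := by
      constructor
      · intro h
        rw [← h]; group
      · intro h
        rw [← h]; group
    rw [CoxeterSystem.rightInvSeq]
    rw [List.count_cons]
    simp only [beq_iff_eq]
    rw [Prod.ext_iff]
    constructor
    · simp only [mul_inv_rev, cs.inv_simple]
      group
    · simp only
      by_cases h : (π ω)⁻¹ * s i * π ω = t
      · rw [if_pos (hcond.mpr h), if_pos h, pow_add, pow_one, mul_neg_one, neg_mul]
      · rw [if_neg (fun hc => h (hcond.mp hc)), if_neg h, add_zero]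

/-- The sign of `w` at `t`. -/
noncomputable def sgn (w t : W) : ℤˣ := (mus cs w (t, 1)).2

lemma mus_apply_eq_sgn (w t : W) (ε : ℤˣ) : mus cs w (t, ε) = (w * t * w⁻¹, sgn cs w t * ε) := by
  obtain ⟨ω, rfl⟩ := cs.wordProd_surjective w
  rw [mus_wordProd, sgn, mus_wordProd, mul_one]

lemma sgn_wordProd (ω : List B) (t : W) :
    sgn cs (π ω) t = (-1:ℤˣ)^(List.count t (cs.rightInvSeq ω)) := by
  rw [sgn, mus_wordProd, mul_one]

lemma sgn_of_not_descent {w : W} {i : B} (h : ¬ cs.IsRightDescent w i) :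
    sgn cs w (s i) = 1 := by
  obtain ⟨ω, hred, rfl⟩ := cs.exists_reduced_word' w
  rw [sgn_wordProd]
  have hcount : List.count (s i) (cs.rightInvSeq ω) = 0 := by
    rw [List.count_eq_zero]
    intro hmem
    exact h (cs.isRightInversion_of_mem_rightInvSeq hred hmem).2
  rw [hcount, pow_zero]

lemma sgn_of_descent {w : W} {i : B} (h : cs.IsRightDescent w i) :
    sgn cs w (s i) = -1 := by
  have hw : w = (w * s i) * s i := by rw [cs.simple_mul_simple_cancel_right]
  have hnd : ¬ cs.IsRightDescent (w * s i) i := by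
    intro hd
    rw [CoxeterSystem.IsRightDescent, cs.simple_mul_simple_cancel_right] at hd
    exact Nat.lt_asymm h hd
  have h1 : mus cs w (s i, 1) = mus cs (w * s i) (mus cs (s i) (s i, 1)) := by
    rw [hw]; rw [map_mul, Equiv.Perm.mul_apply, ← hw]
  rw [mus_simple, fmu_apply, if_pos rfl, cs.simple_mul_simple_self, one_mul] at h1
  rw [sgn, h1, mus_apply_eq_sgn, sgn_of_not_descent cs hnd]
  simp

/-- Strong exchange property, for simple reflections. -/
lemma exchange {ω : List B} {i : B} (h : cs.IsRightDescent (π ω) i) :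
    ∃ j, j < ω.length ∧ π ω * s i = π (ω.eraseIdx j) := by
  have hsgn := sgn_of_descent cs h
  rw [sgn_wordProd] at hsgn
  have hcount : List.count (s i) (cs.rightInvSeq ω) ≠ 0 := by
    intro h0
    rw [h0, pow_zero] at hsgn
    exact absurd hsgn (by decide)
  have hmem : (s i) ∈ cs.rightInvSeq ω := List.count_pos_iff.mp (Nat.pos_of_ne_zero hcount)
  obtain ⟨j, hj, hgj⟩ := List.getElem_of_mem hmem
  rw [cs.length_rightInvSeq] at hj
  refine ⟨j, hj, ?_⟩
  have : (cs.rightInvSeq ω).getD j 1 = s i := by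
    rw [List.getD_eq_getElem _ _ (by rw [cs.length_rightInvSeq]; exact hj), hgj]
  rw [← this, cs.wordProd_mul_getD_rightInvSeq]

end SolomonAux

namespace SolomonAux

variable {B W : Type*} [DecidableEq B] [DecidableEq W] [Group W] {M : CoxeterMatrix B}
  (cs : CoxeterSystem M W)

local prefix:100 "s" => cs.simple
local prefix:100 "π" => cs.wordProd
local prefix:100 "ℓ" => cs.length

/-- Every word can be replaced by a reduced word with the same product, using only
letters of the original word. -/
lemma exists_reduced_subword : ∀ (ω : List B), ∃ ω' : List B,
    cs.IsReduced ω' ∧ π ω' = π ω ∧ ∀ b ∈ ω', b ∈ ω := by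
  suffices H : ∀ n : ℕ, ∀ ω : List B, ω.length ≤ n →
      ∃ ω', cs.IsReduced ω' ∧ π ω' = π ω ∧ ∀ b ∈ ω', b ∈ ω by
    intro ω; exact H ω.length ω le_rfl
  intro n
  induction n with
  | zero =>
    intro ω hω
    rw [Nat.le_zero, List.length_eq_zero_iff] at hω
    subst hω
    exact ⟨[], by simp [CoxeterSystem.IsReduced], rfl, by simp⟩
  | succ n ih =>
  intro ω hn
  by_cases hred : cs.IsReduced ω
  · exact ⟨ω, hred, rfl, fun b hb => hb⟩
  · have hlen : ω.length ≠ 0 := by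
      intro h0
      rw [List.length_eq_zero_iff] at h0
      exact hred (by rw [h0]; simp [CoxeterSystem.IsReduced])
    have hex : ∃ j, ¬ cs.IsReduced (ω.take (j+1)) := by
      refine ⟨ω.length - 1, ?_⟩
      rw [show ω.length - 1 + 1 = ω.length by omega, List.take_length]
      exact hred
    classical
    set j₀ := Nat.find hex with hj₀
    have hj₀spec : ¬ cs.IsReduced (ω.take (j₀+1)) := Nat.find_spec hex
    have hj₀min : ∀ k, k < j₀ → cs.IsReduced (ω.take (k+1)) := fun k hk => by
      have := Nat.find_min hex hk
      exact not_not.mp this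
    have hj₀red : cs.IsReduced (ω.take j₀) := by
      rcases Nat.eq_zero_or_pos j₀ with h0 | h0
      · rw [h0]; simp [CoxeterSystem.IsReduced]
      · have := hj₀min (j₀ - 1) (by omega)
        rwa [show j₀ - 1 + 1 = j₀ by omega] at this
    have hj₀lt : j₀ < ω.length := by
      by_contra hge
      push_neg at hge
      rw [List.take_of_length_le (by omega)] at hj₀spec
      rw [List.take_of_length_le hge] at hj₀red
      exact hj₀spec hj₀red
    set x := ω[j₀] with hx
    have htake : ω.take (j₀+1) = ω.take j₀ ++ [x] := by
      rw [List.take_succ, List.getElem?_eq_getElem hj₀lt]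
      rfl
    have hu : π (ω.take (j₀+1)) = π (ω.take j₀) * s x := by
      rw [htake, cs.wordProd_append, cs.wordProd_singleton]
    have hlen_take : ℓ (π (ω.take j₀)) = j₀ := by
      have := hj₀red
      rw [CoxeterSystem.IsReduced] at this
      rw [this, List.length_take]
      omega
    have hdesc : cs.IsRightDescent (π (ω.take j₀)) x := by
      rw [CoxeterSystem.IsRightDescent, hlen_take, ← hu]
      have h1 : ℓ (π (ω.take (j₀+1))) ≠ (ω.take (j₀+1)).length := hj₀spec
      have h2 : ℓ (π (ω.take (j₀+1))) ≤ (ω.take (j₀+1)).length := cs.length_wordProd_le _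
      have h3 : (ω.take (j₀+1)).length = j₀ + 1 := by rw [List.length_take]; omega
      have h4 : ℓ (π (ω.take (j₀+1))) ≠ ℓ (π (ω.take j₀)) := by
        rw [hu, hlen_take]
        have := cs.length_mul_simple_ne (π (ω.take j₀)) x
        rw [hlen_take] at this
        exact this
      rw [hlen_take] at h4
      omega
    obtain ⟨j', hj'lt, hj'⟩ := exchange cs hdesc
    set ω₂ := ((ω.take j₀).eraseIdx j') ++ ω.drop (j₀+1) with hω₂
    have hπ2 : π ω₂ = π ω := by
      rw [hω₂, cs.wordProd_append, ← hj', ← hu, ← cs.wordProd_append, List.take_append_drop]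
    have hlen2 : ω₂.length < ω.length := by
      rw [hω₂, List.length_append, List.length_eraseIdx]
      rw [List.length_take] at hj'lt ⊢
      simp only [if_pos hj'lt, List.length_drop]
      omega
    have hmem2 : ∀ b ∈ ω₂, b ∈ ω := by
      intro b hb
      rw [hω₂, List.mem_append] at hb
      rcases hb with hb | hb
      · exact ((List.eraseIdx_sublist _ j').trans (List.take_sublist _ _)).subset hb
      · exact (List.drop_sublist _ _).subset hb
    obtain ⟨ω', hred', hπ', hmem'⟩ := ih ω₂ (by omega)
    exact ⟨ω', hred', hπ'.trans hπ2, fun b hb => hmem2 b (hmem' b hb)⟩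

lemma mem_closure_iff_word (K : Set B) (w : W) :
    w ∈ Subgroup.closure (cs.simple '' K) ↔ ∃ ω : List B, (∀ b ∈ ω, b ∈ K) ∧ w = π ω := by
  constructor
  · intro hw
    induction hw using Subgroup.closure_induction with
    | mem x hx =>
      obtain ⟨k, hk, rfl⟩ := hx
      exact ⟨[k], by simpa using hk, (cs.wordProd_singleton k).symm⟩
    | one => exact ⟨[], by simp, by simp⟩
    | mul x y _ _ hx hy =>
      obtain ⟨ω₁, h1, rfl⟩ := hx
      obtain ⟨ω₂, h2, rfl⟩ := hy
      exact ⟨ω₁ ++ ω₂, fun b hb => by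
        rcases List.mem_append.mp hb with h | h
        exacts [h1 b h, h2 b h], (cs.wordProd_append ω₁ ω₂).symm⟩
    | inv x _ hx =>
      obtain ⟨ω, h1, rfl⟩ := hx
      exact ⟨ω.reverse, fun b hb => h1 b (List.mem_reverse.mp hb),
        (cs.wordProd_reverse ω).symm⟩
  · rintro ⟨ω, hmem, rfl⟩
    induction ω with
    | nil => simp [Subgroup.one_mem]
    | cons i ω ih =>
      rw [cs.wordProd_cons]
      exact Subgroup.mul_mem _
        (Subgroup.subset_closure ⟨i, hmem i (by simp), rfl⟩)
        (ih (fun b hb => hmem b (List.mem_cons_of_mem i hb)))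

lemma rightInvSeq_mem_closure (K : Set B) (ω : List B) (hω : ∀ b ∈ ω, b ∈ K) :
    ∀ t ∈ cs.rightInvSeq ω, t ∈ Subgroup.closure (cs.simple '' K) := by
  induction ω with
  | nil => simp [CoxeterSystem.rightInvSeq]
  | cons i ω ih =>
    intro t ht
    rw [CoxeterSystem.rightInvSeq, List.mem_cons] at ht
    have hω' : ∀ b ∈ ω, b ∈ K := fun b hb => hω b (List.mem_cons_of_mem i hb)
    have hπω : π ω ∈ Subgroup.closure (cs.simple '' K) :=
      (mem_closure_iff_word cs K (π ω)).mpr ⟨ω, hω', rfl⟩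
    rcases ht with rfl | ht
    · exact Subgroup.mul_mem _ (Subgroup.mul_mem _ (Subgroup.inv_mem _ hπω)
        (Subgroup.subset_closure ⟨i, hω i (by simp), rfl⟩)) hπω
    · exact ih hω' t ht

/-- A simple reflection lying in a standard parabolic subgroup equals a simple
reflection with index in the generating set. -/
lemma simple_eq_of_mem_closure {K : Set B} {i : B}
    (h : s i ∈ Subgroup.closure (cs.simple '' K)) : ∃ k ∈ K, s i = s k := by
  obtain ⟨ω, hmem, hw⟩ := (mem_closure_iff_word cs K _).mp h
  obtain ⟨ω', hred, hπ, hmem'⟩ := exists_reduced_subword cs ω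
  have hlen : ω'.length = 1 := by
    have h1 : ℓ (π ω') = 1 := by rw [hπ, ← hw, cs.length_simple]
    rw [CoxeterSystem.IsReduced] at hred
    omega
  match ω', hlen with
  | [k], _ =>
    refine ⟨k, hmem k (hmem' k (by simp)), ?_⟩
    rw [hw, ← hπ, cs.wordProd_singleton]

end SolomonAux

namespace SolomonAux

variable {B W : Type*} [DecidableEq B] [Fintype B] [DecidableEq W] [Group W] [Fintype W]
  {M : CoxeterMatrix B} (cs : CoxeterSystem M W)

local prefix:100 "s" => cs.simple
local prefix:100 "π" => cs.wordProd
local prefix:100 "ℓ" => cs.length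

/-- Realization of arbitrary descent sets: for any `K ⊆ B` there is an element of `W`
whose right descent set is exactly `K`. -/
lemma exists_descent_eq (K : Finset B) : ∃ w : W, ∀ i : B, cs.IsRightDescent w i ↔ i ∈ K := by
  classical
  set H := Subgroup.closure (cs.simple '' (K : Set B)) with hH
  obtain ⟨w, hwmem, hwmax⟩ := Finset.exists_max_image
    (Finset.univ.filter (fun w : W => w ∈ H)) cs.length
    ⟨1, by simp [Subgroup.one_mem]⟩
  rw [Finset.mem_filter] at hwmem
  have hwH : w ∈ H := hwmem.2
  have hwmax' : ∀ u ∈ H, ℓ u ≤ ℓ w := fun u hu =>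
    hwmax u (Finset.mem_filter.mpr ⟨Finset.mem_univ u, hu⟩)
  refine ⟨w, fun i => ⟨?_, ?_⟩⟩
  · intro hdesc
    obtain ⟨ω, hmem, hw⟩ := (mem_closure_iff_word cs _ w).mp hwH
    subst hw
    obtain ⟨j, hj, hj'⟩ := exchange cs hdesc
    have hsi : s i ∈ H := by
      have heq : s i = (π ω)⁻¹ * π (ω.eraseIdx j) := by rw [← hj']; group
      rw [heq]
      exact Subgroup.mul_mem _ (Subgroup.inv_mem _ hwH)
        ((mem_closure_iff_word cs _ _).mpr ⟨ω.eraseIdx j,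
          fun b hb => hmem b ((List.eraseIdx_sublist ω j).subset hb), rfl⟩)
    obtain ⟨k, hk, hsk⟩ := simple_eq_of_mem_closure cs hsi
    have hik : i = k := simple_injective cs hsk
    rw [hik]
    exact_mod_cast hk
  · intro hiK
    have hws : w * s i ∈ H := Subgroup.mul_mem _ hwH
      (Subgroup.subset_closure ⟨i, by simpa using hiK, rfl⟩)
    have hle := hwmax' _ hws
    have hne := cs.length_mul_simple_ne w i
    rw [CoxeterSystem.IsRightDescent]
    omega

end SolomonAux



open MonoidAlgebra

variable {B W : Type*} [DecidableEq B] [Fintype B] [Group W] [Fintype W] [DecidableEq W]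

/-- The standard parabolic subgroup `W_I` generated by the simple reflections in `I`. -/
def parabolic {M : CoxeterMatrix B} (cs : CoxeterSystem M W) (I : Finset B) : Subgroup W :=
  Subgroup.closure (cs.simple '' I)


namespace SolomonAux

variable {B W : Type*} [DecidableEq B] [Fintype B] [Group W] [Fintype W] [DecidableEq W]
  {M : CoxeterMatrix B}

lemma descentBasis_apply (cs : CoxeterSystem M W) (I : Finset B) (w : W) :
    (descentBasis cs I).coeff w
      = if (∀ i ∈ I, cs.length w < cs.length (w * cs.simple i)) then (1:ℚ) else 0 := by
  rw [descentBasis, MonoidAlgebra.coeff_sum, Finsupp.finset_sum_apply]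
  rw [Finset.sum_eq_single_of_mem w (Finset.mem_univ w)]
  · by_cases h : ∀ i ∈ I, cs.length w < cs.length (w * cs.simple i)
    · rw [if_pos h, if_pos h, MonoidAlgebra.coeff_single, Finsupp.single_apply, if_pos rfl]
    · rw [if_neg h, if_neg h]
      rfl
  · intro v _ hv
    by_cases h : ∀ i ∈ I, cs.length v < cs.length (v * cs.simple i)
    · rw [if_pos h, MonoidAlgebra.coeff_single, Finsupp.single_apply, if_neg hv]
    · rw [if_neg h]
      rfl

lemma not_descent_iff_lt (cs : CoxeterSystem M W) (w : W) (i : B) :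
    ¬ cs.IsRightDescent w i ↔ cs.length w < cs.length (w * cs.simple i) := by
  have := cs.length_mul_simple_ne w i
  rw [CoxeterSystem.IsRightDescent]
  omega

lemma descentBasis_linearIndependent (cs : CoxeterSystem M W) :
    LinearIndependent ℚ (fun I : Finset B => descentBasis cs I) := by
  rw [Fintype.linearIndependent_iff]
  intro g hg
  have key : ∀ J : Finset B, ∑ I ∈ J.powerset, g I = 0 := by
    intro J
    obtain ⟨w, hw⟩ := exists_descent_eq cs Jᶜ
    have h0 : (∑ I : Finset B, g I • descentBasis cs I).coeff w = 0 := by rw [hg]; rfl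
    rw [MonoidAlgebra.coeff_sum, Finsupp.finset_sum_apply] at h0
    have h1 : ∀ I : Finset B,
        (g I • descentBasis cs I).coeff w = if I ⊆ J then g I else 0 := by
      intro I
      rw [MonoidAlgebra.coeff_smul_apply, descentBasis_apply]
      have hcond : (∀ i ∈ I, cs.length w < cs.length (w * cs.simple i)) ↔ I ⊆ J := by
        constructor
        · intro h i hi
          by_contra hiJ
          have : cs.IsRightDescent w i := (hw i).mpr (Finset.mem_compl.mpr hiJ)
          exact absurd ((not_descent_iff_lt cs w i).mpr (h i hi)) (by simp [this])
        · intro h i hi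
          rw [← not_descent_iff_lt]
          intro hd
          exact Finset.mem_compl.mp ((hw i).mp hd) (h hi)
      by_cases h : I ⊆ J
      · rw [if_pos (hcond.mpr h), if_pos h, smul_eq_mul, mul_one]
      · rw [if_neg (fun hc => h (hcond.mp hc)), if_neg h, smul_eq_mul, mul_zero]
    rw [Finset.sum_congr rfl (fun I _ => h1 I), Finset.sum_ite, Finset.sum_const_zero,
      add_zero] at h0
    rw [show J.powerset = Finset.univ.filter (fun I => I ⊆ J) from by ext K; simp]
    exact h0
  intro I
  induction I using Finset.strongInduction with
  | _ I ih =>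
    have h := key I
    have hI : I ∈ I.powerset := Finset.mem_powerset_self I
    rw [← Finset.add_sum_erase _ _ hI] at h
    have hrest : ∑ K ∈ I.powerset.erase I, g K = 0 := by
      apply Finset.sum_eq_zero
      intro K hK
      rw [Finset.mem_erase, Finset.mem_powerset] at hK
      exact ih K (lt_of_le_of_ne hK.2 hK.1)
    rw [hrest, add_zero] at h
    exact h

end SolomonAux

set_option synthInstance.maxHeartbeats 1000000 in
set_option maxHeartbeats 1000000 in
/-- If `F` is a saturated family of subsets of `S` (closed under taking subsets), then
`Σ_F(W) = span{x_I : I ∈ F}` is a left ideal of the descent algebra `Σ(W)`, and the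
character of the left `Σ(W)`-module `Σ_F(W)` is `Σ_{I ∈ F} τ_{λ(I)}`: for `x ∈ Σ(W)`,
the trace of left multiplication by `x` on `Σ_F(W)` equals `Σ_{I ∈ F} τ_{λ(I)}(x)`,
where `τ_{λ(J)}` is characterized by `x·x_J ≡ τ_{λ(J)}(x)·x_J` modulo the span of the
`x_K` with `K ⊊ J`. -/
theorem saturated_leftIdeal_character {M : CoxeterMatrix B}
    (cs : CoxeterSystem M W) (A : Subalgebra ℚ (MonoidAlgebra ℚ W))
    (hA : IsDescentAlgebra cs A)
    (t : Finset B → MonoidAlgebra ℚ W → ℚ)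
    (ht : ∀ (J : Finset B), ∀ x ∈ A,
      x * descentBasis cs J - (t J x) • descentBasis cs J ∈
        Submodule.span ℚ (descentBasis cs '' {K | K ⊂ J}))
    (F : Finset (Finset B)) (hF : ∀ I ∈ F, ∀ I' ⊆ I, I' ∈ F) :
    (∀ x ∈ A, ∀ y ∈ Submodule.span ℚ (descentBasis cs '' (F : Set (Finset B))),
        x * y ∈ Submodule.span ℚ (descentBasis cs '' (F : Set (Finset B)))) ∧
    (∀ x, ∀ _ : x ∈ A,
      ∀ h : ∀ y ∈ Submodule.span ℚ (descentBasis cs '' (F : Set (Finset B))),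
        (LinearMap.mulLeft ℚ x) y ∈
          Submodule.span ℚ (descentBasis cs '' (F : Set (Finset B))),
      LinearMap.trace ℚ _ ((LinearMap.mulLeft ℚ x).restrict h) = ∑ I ∈ F, t I x) := by
  classical
  set V := Submodule.span ℚ (descentBasis cs '' (F : Set (Finset B))) with hV
  have hUV : ∀ J ∈ F, Submodule.span ℚ (descentBasis cs '' {K | K ⊂ J}) ≤ V := by
    intro J hJ
    apply Submodule.span_mono
    apply Set.image_mono
    intro K hK
    exact hF J hJ K hK.subset
  have hsub : ∀ J ∈ F, ∀ x ∈ A, x * descentBasis cs J ∈ V := by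
    intro J hJ x hx
    have h3 : x * descentBasis cs J - t J x • descentBasis cs J ∈ V := hUV J hJ (ht J x hx)
    have h4 : descentBasis cs J ∈ V := Submodule.subset_span ⟨J, hJ, rfl⟩
    have h5 := V.add_mem h3 (V.smul_mem (t J x) h4)
    simpa using h5
  have hideal : ∀ x ∈ A, ∀ y ∈ V, x * y ∈ V := by
    intro x hx y hy
    induction hy using Submodule.span_induction with
    | mem z hz =>
      obtain ⟨J, hJ, rfl⟩ := hz
      exact hsub J hJ x hx
    | zero => rw [mul_zero]; exact V.zero_mem
    | add a b _ _ ha hb => rw [mul_add]; exact V.add_mem ha hb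
    | smul c a _ ha => rw [mul_smul_comm]; exact V.smul_mem c ha
  refine ⟨hideal, ?_⟩
  intro x hx h
  set e : {I : Finset B // I ∈ F} → MonoidAlgebra ℚ W := fun i => descentBasis cs i.1 with he
  have hli : LinearIndependent ℚ e :=
    (SolomonAux.descentBasis_linearIndependent cs).comp _ Subtype.val_injective
  have hrange : Set.range e = descentBasis cs '' (F : Set (Finset B)) := by
    ext z
    constructor
    · rintro ⟨i, rfl⟩; exact ⟨i.1, i.2, rfl⟩
    · rintro ⟨I, hI, rfl⟩; exact ⟨⟨I, hI⟩, rfl⟩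
  have hspan : Submodule.span ℚ (Set.range e) = V := by rw [hrange]
  let b : Module.Basis {I : Finset B // I ∈ F} ℚ V :=
    (Module.Basis.span hli).map (LinearEquiv.ofEq _ _ hspan)
  have hb : ∀ i, (b i : MonoidAlgebra ℚ W) = e i := by
    intro i
    show ((LinearEquiv.ofEq _ _ hspan) (Module.Basis.span hli i) : MonoidAlgebra ℚ W) = e i
    rw [LinearEquiv.coe_ofEq_apply, Module.Basis.span_apply]
  have hrepr0 : ∀ (I : {I : Finset B // I ∈ F}) (z : MonoidAlgebra ℚ W)
      (hz : z ∈ Submodule.span ℚ (descentBasis cs '' {K | K ⊂ I.1})),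
      ∀ (hzV : z ∈ V), b.repr ⟨z, hzV⟩ I = 0 := by
    intro I z hz
    induction hz using Submodule.span_induction with
    | mem z hzm =>
      intro hzV
      obtain ⟨K, hK, rfl⟩ := hzm
      have hKF : K ∈ F := hF I.1 I.2 K hK.subset
      have hzb : (⟨descentBasis cs K, hzV⟩ : V) = b ⟨K, hKF⟩ :=
        Subtype.ext (by rw [hb ⟨K, hKF⟩])
      rw [hzb, b.repr_self, Finsupp.single_apply, if_neg]
      intro hKI
      exact (ne_of_lt hK) (congrArg Subtype.val hKI)
    | zero =>
      intro hzV
      rw [show (⟨0, hzV⟩ : V) = 0 from rfl, map_zero]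
      rfl
    | add z1 z2 hz1 hz2 ih1 ih2 =>
      intro hzV
      have h1 : z1 ∈ V := hUV I.1 I.2 hz1
      have h2 : z2 ∈ V := hUV I.1 I.2 hz2
      rw [show (⟨z1 + z2, hzV⟩ : V) = ⟨z1, h1⟩ + ⟨z2, h2⟩ from rfl, map_add]
      rw [Finsupp.add_apply, ih1 h1, ih2 h2, add_zero]
    | smul c z1 hz1 ih1 =>
      intro hzV
      have h1 : z1 ∈ V := hUV I.1 I.2 hz1
      rw [show (⟨c • z1, hzV⟩ : V) = c • ⟨z1, h1⟩ from rfl, map_smul]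
      rw [Finsupp.smul_apply, ih1 h1, smul_zero]
  rw [LinearMap.trace_eq_matrix_trace ℚ b ((LinearMap.mulLeft ℚ x).restrict h), Matrix.trace]
  have hdiag : ∀ i : {I : Finset B // I ∈ F},
      Matrix.diag (LinearMap.toMatrix b b ((LinearMap.mulLeft ℚ x).restrict h)) i = t i.1 x := by
    intro i
    rw [Matrix.diag, LinearMap.toMatrix_apply]
    have hmem : x * (b i : MonoidAlgebra ℚ W) ∈ V := hideal x hx _ (b i).2
    have happ : ((LinearMap.mulLeft ℚ x).restrict h) (b i) = ⟨x * (b i : MonoidAlgebra ℚ W), hmem⟩ :=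
      Subtype.ext rfl
    have hz : x * e i - t i.1 x • e i ∈ Submodule.span ℚ (descentBasis cs '' {K | K ⊂ i.1}) :=
      ht i.1 x hx
    have hzV : x * e i - t i.1 x • e i ∈ V := hUV i.1 i.2 hz
    have hsplit : (⟨x * (b i : MonoidAlgebra ℚ W), hmem⟩ : V)
        = ⟨x * e i - t i.1 x • e i, hzV⟩ + t i.1 x • b i := by
      apply Subtype.ext
      show x * (b i : MonoidAlgebra ℚ W)
        = (x * e i - t i.1 x • e i) + t i.1 x • (b i : MonoidAlgebra ℚ W)
      rw [hb i]
      module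
    rw [happ, hsplit, map_add, map_smul, Finsupp.add_apply, Finsupp.smul_apply,
      hrepr0 i _ hz hzV, b.repr_self, Finsupp.single_apply, if_pos rfl]
    simp
  rw [Finset.sum_congr rfl (fun i _ => hdiag i)]
  rw [← Finset.sum_coe_sort F (fun I => t I x)]
end

section
/- Let (W,S) be a finite Coxeter system with longest element w₀ central in W, and let σ₀ denote conjugation by w₀. Then the Loewy length of the descent algebra satisfies LL(W) ≤ ⌈(|S|+1)/2⌉; more precisely, (Ker θ)^{σ₀}·Σ_k(W) ⊆ Σ_{k−2}(W) for all k, where Σ_k(W) is the span of the x_J with |J| ≤ k, hence ((Ker θ)^{σ₀})^r ⊆ Σ_{|S|−2r}(W) and (Rad Σ(W)^{σ₀})^{⌈(|S|+1)/2⌉} = 0. -/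
open MonoidAlgebra

variable {B W : Type*} [DecidableEq B] [Fintype B] [Group W] [Fintype W] [DecidableEq W]

/-- `Σ_k(W)`: the span of the `x_J` with `|J| ≤ k` (for `k < 0` this is `0`). -/
noncomputable def descentFiltration {M : CoxeterMatrix B} (cs : CoxeterSystem M W)
    (k : ℤ) : Submodule ℚ (MonoidAlgebra ℚ W) :=
  Submodule.span ℚ (descentBasis cs '' {J : Finset B | (J.card : ℤ) ≤ k})

open List

namespace CoxAux

set_option linter.unusedSectionVars false

variable {B : Type*} {W : Type*} [Group W] [DecidableEq B] [DecidableEq W]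
variable {M : CoxeterMatrix B} (cs : CoxeterSystem M W)

local prefix:100 "s" => cs.simple
local prefix:100 "π" => cs.wordProd
local prefix:100 "ℓ" => cs.length

/-- The sign-flipping action of a generator on `W × ℤˣ`. -/
def etaFun (i : B) : W × ℤˣ → W × ℤˣ :=
  fun p => (s i * p.1 * s i, if p.1 = s i then -p.2 else p.2)

theorem etaFun_involutive (i : B) : Function.Involutive (etaFun cs i) := by
  rintro ⟨t, ε⟩
  simp only [etaFun]
  have h1 : s i * (s i * t * s i) * s i = t := by
    rw [← mul_assoc, ← mul_assoc, cs.simple_mul_simple_self, one_mul, mul_assoc,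
      cs.simple_mul_simple_self, mul_one]
  have h2 : (s i * t * s i = s i) ↔ (t = s i) := by
    constructor
    · intro h
      calc t = s i * (s i * t * s i) * s i := h1.symm
        _ = s i * (s i) * s i := by rw [h]
        _ = s i := by rw [cs.simple_mul_simple_self]; simp
    · rintro rfl; simp [cs.simple_mul_simple_self]
  by_cases h : t = s i <;> simp [h, h1, h2]

/-- The sign-flipping permutation. -/
def eta (i : B) : Equiv.Perm (W × ℤˣ) := (etaFun_involutive cs i).toPerm

@[simp] theorem eta_apply (i : B) (p : W × ℤˣ) : eta cs i p = etaFun cs i p := rfl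

/-- Applying the `eta`s of a word, leftmost letter first. -/
def etaWord (ω : List B) (p : W × ℤˣ) : W × ℤˣ :=
  ω.foldl (fun q i => etaFun cs i q) p

@[simp] theorem etaWord_nil (p : W × ℤˣ) : etaWord cs [] p = p := rfl

theorem etaWord_append (ω ω' : List B) (p : W × ℤˣ) :
    etaWord cs (ω ++ ω') p = etaWord cs ω' (etaWord cs ω p) := by
  simp [etaWord, List.foldl_append]

theorem etaWord_apply (ω : List B) (t : W) (ε : ℤˣ) :
    etaWord cs ω (t, ε) =
      ((π ω)⁻¹ * t * (π ω), (-1) ^ ((cs.leftInvSeq ω).count t) * ε) := by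
  induction ω using List.reverseRecOn with
  | nil => simp
  | append_singleton ω i ih =>
      rw [etaWord_append, ih]
      have hl : cs.leftInvSeq (ω ++ [i]) =
          cs.leftInvSeq ω ++ [π ω * s i * (π ω)⁻¹] := by
        simpa [List.concat_eq_append] using cs.leftInvSeq_concat ω i
      have hπ : π (ω ++ [i]) = π ω * s i := by
        simpa using cs.wordProd_append ω [i]
      have hcond : ((π ω)⁻¹ * t * π ω = s i) ↔ (t = π ω * s i * (π ω)⁻¹) := by
        constructor
        · intro h
          have := congrArg (fun z => π ω * z * (π ω)⁻¹) h
          simpa [mul_assoc] using this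
        · rintro rfl; group
      simp only [etaWord, List.foldl_cons, List.foldl_nil, etaFun]
      rw [hl, hπ, List.count_append, Prod.mk.injEq]
      constructor
      · simp [mul_assoc]
      · simp only [List.count_singleton]
        by_cases h : t = π ω * s i * (π ω)⁻¹
        · rw [if_pos (hcond.mpr h), if_pos (by simpa using h.symm)]
          rw [pow_add, pow_one]
          rw [mul_neg_one, neg_mul]
        · rw [if_neg (fun hh => h (hcond.mp hh)), if_neg (by simpa using fun hh => h hh.symm)]
          simp

theorem getD_leftInvSeq_alternatingWord (x y : B) (n k : ℕ) (h : k < n) :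
    (cs.leftInvSeq (CoxeterSystem.alternatingWord x y n)).getD k 1 =
      (if Even n then π (CoxeterSystem.alternatingWord y x (2 * k + 1))
       else π (CoxeterSystem.alternatingWord x y (2 * k + 1))) := by
  induction n generalizing k with
  | zero => omega
  | succ n ih =>
      rw [CoxeterSystem.alternatingWord_succ']
      cases k with
      | zero =>
          simp only [CoxeterSystem.leftInvSeq, List.getD_cons_zero]
          by_cases hn : Even n
          · have : ¬ Even (n+1) := by simp [Nat.even_add_one, hn]
            simp [hn, this, CoxeterSystem.alternatingWord]
          · have : Even (n+1) := by simp [Nat.even_add_one, hn]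
            simp [hn, this, CoxeterSystem.alternatingWord]
      | succ k =>
          have hk : k < n := by omega
          simp only [CoxeterSystem.leftInvSeq, List.getD_cons_succ]
          rw [(by simp : (1:W) = ⇑(MulAut.conj (s (if Even n then y else x))) 1), List.getD_map,
            ih k hk]
          by_cases hn : Even n
          · have hn1 : ¬ Even (n+1) := by simp [Nat.even_add_one, hn]
            simp only [hn, if_true, hn1, if_false, MulAut.conj_apply]
            have e1 : CoxeterSystem.alternatingWord x y (2 * (k+1) + 1)
                = (CoxeterSystem.alternatingWord y x (2 * k + 2)).concat y := by
              rw [← CoxeterSystem.alternatingWord_succ]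
              congr 1
            have e2 : CoxeterSystem.alternatingWord y x (2 * k + 2)
                = y :: CoxeterSystem.alternatingWord y x (2 * k + 1) := by
              rw [CoxeterSystem.alternatingWord_succ']
              simp [Nat.even_add_one, parity_simps]
            rw [e1, cs.wordProd_concat, e2, cs.wordProd_cons]
            rw [cs.inv_simple]
          · have hn1 : Even (n+1) := by simp [Nat.even_add_one, hn]
            simp only [hn, if_false, hn1, if_true, MulAut.conj_apply]
            have e1 : CoxeterSystem.alternatingWord y x (2 * (k+1) + 1)
                = (CoxeterSystem.alternatingWord x y (2 * k + 2)).concat x := by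
              rw [← CoxeterSystem.alternatingWord_succ]
              congr 1
            have e2 : CoxeterSystem.alternatingWord x y (2 * k + 2)
                = x :: CoxeterSystem.alternatingWord x y (2 * k + 1) := by
              rw [CoxeterSystem.alternatingWord_succ']
              simp [Nat.even_add_one, parity_simps]
            rw [e1, cs.wordProd_concat, e2, cs.wordProd_cons]
            rw [cs.inv_simple]

theorem prod_alt_odd (i j : B) (k : ℕ) :
    π (CoxeterSystem.alternatingWord i j (2 * k + 1)) = s j * (s i * s j) ^ k := by
  rw [cs.prod_alternatingWord_eq_mul_pow]
  have h1 : ¬ Even (2 * k + 1) := by simp [Nat.even_add_one, parity_simps]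
  have h2 : (2 * k + 1) / 2 = k := by omega
  simp [h1, h2]

theorem prod_alt_odd_periodic (i j : B) (k : ℕ) :
    π (CoxeterSystem.alternatingWord i j (2 * (k + M i j) + 1)) =
      π (CoxeterSystem.alternatingWord i j (2 * k + 1)) := by
  rw [prod_alt_odd, prod_alt_odd, pow_add, cs.simple_mul_simple_pow i j, mul_one]

theorem lis_alt_eq_append (i j : B) :
    cs.leftInvSeq (CoxeterSystem.alternatingWord j i (2 * M i j)) =
      ((List.range (M i j)).map (fun k => π (CoxeterSystem.alternatingWord i j (2 * k + 1)))) ++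
      ((List.range (M i j)).map (fun k => π (CoxeterSystem.alternatingWord i j (2 * k + 1)))) := by
  set m := M i j with hm
  set f : ℕ → W := fun k => π (CoxeterSystem.alternatingWord i j (2 * k + 1)) with hf
  have hlen : (cs.leftInvSeq (CoxeterSystem.alternatingWord j i (2 * m))).length = 2 * m := by
    rw [cs.length_leftInvSeq, CoxeterSystem.length_alternatingWord]
  have hget : ∀ k, k < 2 * m →
      (cs.leftInvSeq (CoxeterSystem.alternatingWord j i (2 * m))).getD k 1 = f k := by
    intro k hk
    rw [getD_leftInvSeq_alternatingWord cs j i (2 * m) k hk, if_pos (by exact ⟨m, by omega⟩)]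
  apply List.ext_getElem
  · simp [hlen]; omega
  · intro k h1 h2
    have hk : k < 2 * m := by rw [hlen] at h1; exact h1
    have hL : GetElem.getElem (cs.leftInvSeq (CoxeterSystem.alternatingWord j i (2 * m))) k h1 = f k := by
      rw [← List.getD_eq_getElem _ 1 h1]
      exact hget k hk
    rw [hL]
    by_cases hkm : k < m
    · rw [List.getElem_append_left (by simp [hkm])]
      simp [hkm]
    · rw [List.getElem_append_right (by simp; omega)]
      have : k - m < m := by omega
      simp only [List.getElem_map, List.getElem_range]
      have : f ((k - m) + m) = f (k - m) := by
        rw [hf]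
        exact prod_alt_odd_periodic cs i j (k - m)
      have hke : (k - m) + m = k := by omega
      rw [hke] at this
      rw [this]
      congr 1
      simp [List.length_map, List.length_range]

theorem eta_liftable : M.IsLiftable (fun i => eta cs i) := by
  intro i j
  set m := M i j with hm
  have key : ∀ (n : ℕ) (p : W × ℤˣ),
      ((eta cs i * eta cs j) ^ n) p = etaWord cs (CoxeterSystem.alternatingWord j i (2 * n)) p := by
    intro n
    induction n with
    | zero => intro p; simp [CoxeterSystem.alternatingWord]
    | succ n ih =>
        intro p
        have e1 : CoxeterSystem.alternatingWord j i (2 * (n+1))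
            = j :: i :: CoxeterSystem.alternatingWord j i (2 * n) := by
          have h1 : 2 * (n+1) = (2 * n + 1) + 1 := by omega
          rw [h1, CoxeterSystem.alternatingWord_succ', CoxeterSystem.alternatingWord_succ']
          simp [Nat.even_add_one, parity_simps]
        rw [e1, pow_succ]
        simp only [Equiv.Perm.mul_apply]
        rw [ih]
        simp only [etaWord, List.foldl_cons]
        rfl
  apply Equiv.ext
  rintro ⟨t, ε⟩
  rw [key m (t, ε), etaWord_apply]
  have hπ : π (CoxeterSystem.alternatingWord j i (2 * m)) = 1 := by
    rw [cs.prod_alternatingWord_eq_mul_pow, if_pos (by exact ⟨m, by omega⟩)]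
    have : (2 * m) / 2 = m := by omega
    rw [this, one_mul, hm, cs.simple_mul_simple_pow' i j]
  have hcount : Even ((cs.leftInvSeq (CoxeterSystem.alternatingWord j i (2 * m))).count t) := by
    rw [lis_alt_eq_append cs i j, List.count_append]
    exact ⟨_, rfl⟩
  rw [hπ]
  rw [hcount.neg_one_pow]
  simp

/-- The homomorphism `W →* Perm (W × ℤˣ)`. -/
noncomputable def piHom : W →* Equiv.Perm (W × ℤˣ) :=
  cs.lift ⟨fun i => eta cs i, eta_liftable cs⟩

theorem piHom_wordProd (ω : List B) (p : W × ℤˣ) :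
    piHom cs ((π ω)⁻¹) p = etaWord cs ω p := by
  induction ω using List.reverseRecOn generalizing p with
  | nil => simp [piHom]
  | append_singleton ω i ih =>
      have hπ : (π (ω ++ [i]))⁻¹ = s i * (π ω)⁻¹ := by
        rw [cs.wordProd_append]
        simp [cs.inv_simple]
      rw [hπ, map_mul, Equiv.Perm.mul_apply, ih, etaWord_append]
      show (cs.lift ⟨fun i => eta cs i, eta_liftable cs⟩) (s i) _ = _
      rw [cs.lift_apply_simple]
      rfl

theorem count_parity {ω ω' : List B} (h : π ω = π ω') (t : W) :
    ((-1 : ℤˣ)) ^ ((cs.leftInvSeq ω).count t) = (-1 : ℤˣ) ^ ((cs.leftInvSeq ω').count t) := by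
  have h1 := piHom_wordProd cs ω (t, 1)
  have h2 := piHom_wordProd cs ω' (t, 1)
  rw [h] at h1
  rw [h1] at h2
  rw [etaWord_apply, etaWord_apply] at h2
  have := congrArg Prod.snd h2
  simpa using this

/-- The (left) exchange property. -/
theorem leftExchange {ω : List B} (hω : cs.IsReduced ω) {i : B}
    (h : ℓ (s i * π ω) < ℓ (π ω)) :
    ∃ j < ω.length, s i * π ω = π (ω.eraseIdx j) := by
  obtain ⟨ω', hred', heq'⟩ := cs.exists_reduced_word' (s i * π ω)
  have hπ : π (i :: ω') = π ω := by
    rw [cs.wordProd_cons, ← heq', ← mul_assoc, cs.simple_mul_simple_self, one_mul]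
  have hlen' : ω'.length = ℓ (s i * π ω) := by rw [heq']; exact hred'.symm
  have hred'' : cs.IsReduced (i :: ω') := by
    unfold CoxeterSystem.IsReduced
    rw [hπ, List.length_cons, hlen']
    have := (cs.isLeftDescent_iff (w := π ω) (i := i)).mp h
    omega
  have hmem : s i ∈ cs.leftInvSeq (i :: ω') := by
    show s i ∈ s i :: _
    exact List.mem_cons_self
  have hcount1 : (cs.leftInvSeq (i :: ω')).count (s i) = 1 :=
    List.count_eq_one_of_mem (hred''.nodup_leftInvSeq cs) hmem
  have hpar := count_parity cs hπ (s i)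
  rw [hcount1, pow_one] at hpar
  have hcpos : 0 < (cs.leftInvSeq ω).count (s i) := by
    rcases Nat.eq_zero_or_pos ((cs.leftInvSeq ω).count (s i)) with hc | hc
    · rw [hc, pow_zero] at hpar
      simp at hpar
    · exact hc
  have hmemω : s i ∈ cs.leftInvSeq ω := List.count_pos_iff.mp hcpos
  obtain ⟨j, hj, hjeq⟩ := List.mem_iff_getElem.mp hmemω
  have hjlen : j < ω.length := by
    rwa [cs.length_leftInvSeq] at hj
  refine ⟨j, hjlen, ?_⟩
  have := cs.getD_leftInvSeq_mul_wordProd ω j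
  rw [List.getD_eq_getElem _ 1 hj, hjeq] at this
  exact this

section Longest

variable {w₀ : W}

theorem simple_mul_w₀_lt (hmax : ∀ w : W, ℓ w ≤ ℓ w₀) (i : B) :
    ℓ (s i * w₀) + 1 = ℓ w₀ := by
  rcases cs.length_simple_mul w₀ i with h | h
  · exfalso
    have := hmax (s i * w₀)
    omega
  · exact h

theorem length_w₀_mul (hmax : ∀ w : W, ℓ w ≤ ℓ w₀) (hcent : ∀ w : W, w₀ * w = w * w₀)
    (u : W) : ℓ (w₀ * u) + ℓ u = ℓ w₀ := by
  suffices h : ∀ (n : ℕ) (u : W), ℓ u = n → ℓ (w₀ * u) + ℓ u = ℓ w₀ by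
    exact h (ℓ u) u rfl
  intro n
  induction n using Nat.strong_induction_on with
  | _ n ih =>
    intro u hu
    rcases eq_or_ne u 1 with rfl | hne
    · simp
    · obtain ⟨i, hdesc⟩ := cs.exists_leftDescent_of_ne_one hne
      have hlu' : ℓ (s i * u) + 1 = ℓ u := cs.isLeftDescent_iff.mp hdesc
      set u' := s i * u with hu'def
      have hult : ℓ u' < n := by omega
      have ihres : ℓ (w₀ * u') + ℓ u' = ℓ w₀ := ih (ℓ u') hult u' rfl
      set v := w₀ * u' with hvdef
      have hueq : u = s i * u' := by
        rw [hu'def, ← mul_assoc, cs.simple_mul_simple_self, one_mul]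
      have hw₀u : w₀ * u = s i * v := by
        rw [hueq, hvdef, ← mul_assoc, hcent (s i), mul_assoc]
      rcases cs.length_simple_mul v i with hup | hdown
      · exfalso
        obtain ⟨p, hpred, hpeq⟩ := cs.exists_reduced_word' v
        obtain ⟨r, hrred, hreq⟩ := cs.exists_reduced_word' u'⁻¹
        have hπω : π (p ++ r) = w₀ := by
          rw [cs.wordProd_append, ← hpeq, ← hreq, hvdef, mul_assoc, mul_inv_cancel, mul_one]
        have hlenω : (p ++ r).length = ℓ w₀ := by
          rw [List.length_append, ← hpred, ← hrred, ← hpeq, ← hreq, cs.length_inv]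
          omega
        have hred : cs.IsReduced (p ++ r) := by
          unfold CoxeterSystem.IsReduced
          rw [hπω, hlenω]
        have hdesc₀ : ℓ (s i * π (p ++ r)) < ℓ (π (p ++ r)) := by
          rw [hπω]
          have := simple_mul_w₀_lt cs hmax i
          omega
        obtain ⟨j, hj, hjeq⟩ := leftExchange cs hred hdesc₀
        rw [hπω] at hjeq
        by_cases hjp : j < p.length
        · rw [List.eraseIdx_append_of_lt_length hjp r] at hjeq
          have h1 : s i * v = π (p.eraseIdx j) := by
            rw [hvdef, ← mul_assoc, hjeq, cs.wordProd_append, ← hreq, mul_assoc,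
              inv_mul_cancel, mul_one]
          have h2 : ℓ (s i * v) ≤ (p.eraseIdx j).length := by
            rw [h1]; exact cs.length_wordProd_le _
          have h3 : (p.eraseIdx j).length + 1 = p.length := List.length_eraseIdx_add_one hjp
          have h4 : p.length = ℓ v := by rw [← hpred, hpeq]
          omega
        · push_neg at hjp
          rw [List.eraseIdx_append_of_length_le hjp r] at hjeq
          have h1 : u'⁻¹ * s i = π (r.eraseIdx (j - p.length)) := by
            have h0 : v⁻¹ * (s i * w₀) = π (r.eraseIdx (j - p.length)) := by
              rw [hjeq, cs.wordProd_append, ← hpeq, ← mul_assoc, inv_mul_cancel, one_mul]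
            rw [← h0]
            have hconj : w₀⁻¹ * s i * w₀ = s i := by
              rw [mul_assoc, ← hcent (s i), ← mul_assoc, inv_mul_cancel, one_mul]
            have hstep : v⁻¹ * (s i * w₀) = u'⁻¹ * (w₀⁻¹ * s i * w₀) := by
              rw [hvdef, mul_inv_rev]
              group
            rw [hstep, hconj]
          have h2 : ℓ (u'⁻¹ * s i) ≤ (r.eraseIdx (j - p.length)).length := by
            rw [h1]; exact cs.length_wordProd_le _
          have h3 : (r.eraseIdx (j - p.length)).length + 1 = r.length := by
            apply List.length_eraseIdx_add_one
            rw [List.length_append] at hj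
            omega
          have h4 : ℓ (u'⁻¹ * s i) = ℓ u := by
            have : (u'⁻¹ * s i)⁻¹ = u := by
              rw [mul_inv_rev, inv_inv, cs.inv_simple, hueq]
            rw [← cs.length_inv, this]
          have h5 : r.length = ℓ u' := by rw [← hrred, ← hreq, cs.length_inv]
          omega
      · rw [hw₀u]
        omega

theorem w₀_mul_self (hmax : ∀ w : W, ℓ w ≤ ℓ w₀) (hcent : ∀ w : W, w₀ * w = w * w₀) :
    w₀ * w₀ = 1 := by
  have := length_w₀_mul cs hmax hcent w₀
  have h0 : ℓ (w₀ * w₀) = 0 := by omega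
  exact cs.length_eq_zero_iff.mp h0

theorem rightDescent_w₀_flip (hmax : ∀ w : W, ℓ w ≤ ℓ w₀) (hcent : ∀ w : W, w₀ * w = w * w₀)
    (w : W) (i : B) :
    ℓ (w₀ * w) < ℓ (w₀ * w * s i) ↔ ℓ (w * s i) < ℓ w := by
  have h1 := length_w₀_mul cs hmax hcent w
  have h2 := length_w₀_mul cs hmax hcent (w * s i)
  rw [← mul_assoc] at h2
  have h3 := cs.length_mul_simple w i
  have h4 := cs.length_mul_simple (w₀ * w) i
  omega

end Longest

end CoxAux

namespace CoxAux

variable {M : CoxeterMatrix B} (cs : CoxeterSystem M W)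

local prefix:100 "s" => cs.simple
local prefix:100 "ℓ" => cs.length

theorem powerset_binomial (t : Finset B) (a b : ℚ) :
    ∑ K ∈ t.powerset, a ^ K.card * b ^ (t.card - K.card) = (a + b) ^ t.card := by
  induction t using Finset.induction_on with
  | empty => simp
  | @insert x t hx ih =>
      rw [Finset.powerset_insert, Finset.sum_union, Finset.sum_image]
      · have hcard : (insert x t).card = t.card + 1 := Finset.card_insert_of_notMem hx
        have h1 : ∑ K ∈ t.powerset, a ^ K.card * b ^ ((insert x t).card - K.card)
            = b * ∑ K ∈ t.powerset, a ^ K.card * b ^ (t.card - K.card) := by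
          rw [Finset.mul_sum]
          apply Finset.sum_congr rfl
          intro K hK
          have hKs : K.card ≤ t.card := Finset.card_le_card (Finset.mem_powerset.mp hK)
          have : (insert x t).card - K.card = (t.card - K.card) + 1 := by omega
          rw [this, pow_succ]
          ring
        have h2 : ∑ K ∈ t.powerset, a ^ (insert x K).card * b ^ ((insert x t).card - (insert x K).card)
            = a * ∑ K ∈ t.powerset, a ^ K.card * b ^ (t.card - K.card) := by
          rw [Finset.mul_sum]
          apply Finset.sum_congr rfl
          intro K hK
          have hKs : K ⊆ t := Finset.mem_powerset.mp hK
          have hxK : x ∉ K := fun h => hx (hKs h)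
          have hc : (insert x K).card = K.card + 1 := Finset.card_insert_of_notMem hxK
          have hKs' : K.card ≤ t.card := Finset.card_le_card hKs
          have : (insert x t).card - (insert x K).card = t.card - K.card := by omega
          rw [this, hc, pow_succ]
          ring
        rw [h1, h2, ih, hcard, pow_succ]
        ring
      · intro K hK K' hK' h
        have hxK : x ∉ K := fun hh => hx ((Finset.mem_powerset.mp hK) hh)
        have hxK' : x ∉ K' := fun hh => hx ((Finset.mem_powerset.mp hK') hh)
        have := congrArg (fun z => Finset.erase z x) h
        simpa [Finset.erase_insert_of_ne, Finset.erase_insert, hxK, hxK'] using this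
      · rw [Finset.disjoint_left]
        intro K hK hK'
        obtain ⟨K', hK', rfl⟩ := Finset.mem_image.mp hK'
        exact hx ((Finset.mem_powerset.mp hK) (Finset.mem_insert_self x K'))

theorem alt_sum_powerset (t : Finset B) :
    ∑ K ∈ t.powerset, (-1 : ℚ) ^ K.card = if t = ∅ then 1 else 0 := by
  have := powerset_binomial (B := B) t (-1) 1
  simp only [one_pow, mul_one] at this
  rw [this]
  norm_num
  by_cases h : t = ∅
  · simp [h]
  · have : t.card ≠ 0 := fun hc => h (Finset.card_eq_zero.mp hc)
    simp [h, zero_pow this]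

variable (w₀ : W)

theorem w₀_mul_descentBasis (hmax : ∀ w : W, ℓ w ≤ ℓ w₀) (hcent : ∀ w : W, w₀ * w = w * w₀)
    (K : Finset B) :
    MonoidAlgebra.single w₀ (1 : ℚ) * descentBasis cs K
      = ∑ L ∈ K.powerset, (-1 : ℚ) ^ L.card • descentBasis cs L := by
  have hsq := w₀_mul_self cs hmax hcent
  have lhs_eq : MonoidAlgebra.single w₀ (1 : ℚ) * descentBasis cs K
      = ∑ v : W, if ∀ i ∈ K, ℓ (v * s i) < ℓ v then MonoidAlgebra.single v (1:ℚ) else 0 := by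
    rw [descentBasis, Finset.mul_sum]
    have reindex :
        ∑ w : W, (MonoidAlgebra.single w₀ (1:ℚ) *
          if ∀ i ∈ K, ℓ w < ℓ (w * s i) then MonoidAlgebra.single w (1 : ℚ) else 0)
        = ∑ v : W, (MonoidAlgebra.single w₀ (1:ℚ) *
          if ∀ i ∈ K, ℓ (w₀ * v) < ℓ (w₀ * v * s i) then MonoidAlgebra.single (w₀ * v) (1 : ℚ)
          else 0) := by
      refine (Fintype.sum_equiv (Equiv.mulLeft w₀)
        (fun v => (MonoidAlgebra.single w₀ (1:ℚ) *
          if ∀ i ∈ K, ℓ (w₀ * v) < ℓ (w₀ * v * s i) then MonoidAlgebra.single (w₀ * v) (1 : ℚ)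
          else 0))
        (fun w => (MonoidAlgebra.single w₀ (1:ℚ) *
          if ∀ i ∈ K, ℓ w < ℓ (w * s i) then MonoidAlgebra.single w (1 : ℚ) else 0))
        (fun v => by rw [Equiv.coe_mulLeft])).symm
    rw [reindex]
    apply Finset.sum_congr rfl
    intro v _
    have hv : w₀ * (w₀ * v) = v := by rw [← mul_assoc, hsq, one_mul]
    by_cases h : ∀ i ∈ K, ℓ (v * s i) < ℓ v
    · rw [if_pos (fun i hi => (rightDescent_w₀_flip cs hmax hcent v i).mpr (h i hi)), if_pos h,
        MonoidAlgebra.single_mul_single, hv, mul_one]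
    · rw [if_neg (fun hc => h (fun i hi =>
        (rightDescent_w₀_flip cs hmax hcent v i).mp (hc i hi))), if_neg h, mul_zero]
  rw [lhs_eq]
  have rhs_eq : ∑ L ∈ K.powerset, (-1:ℚ) ^ L.card • descentBasis cs L
      = ∑ v : W, ∑ L ∈ K.powerset,
          ((-1:ℚ) ^ L.card • if ∀ i ∈ L, ℓ v < ℓ (v * s i)
            then MonoidAlgebra.single v (1:ℚ) else 0) := by
    rw [← Finset.sum_comm]
    apply Finset.sum_congr rfl
    intro L _
    rw [descentBasis, Finset.smul_sum]
  rw [rhs_eq]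
  apply Finset.sum_congr rfl
  intro v _
  set E := K.filter (fun i => ℓ v < ℓ (v * s i)) with hE
  have hEK : E ⊆ K := Finset.filter_subset _ _
  have step1 : ∀ L ∈ K.powerset,
      ((-1:ℚ) ^ L.card • if ∀ i ∈ L, ℓ v < ℓ (v * s i) then MonoidAlgebra.single v (1:ℚ) else 0)
      = if L ⊆ E then (-1:ℚ) ^ L.card • MonoidAlgebra.single v (1:ℚ) else 0 := by
    intro L hL
    have hLK : L ⊆ K := Finset.mem_powerset.mp hL
    rw [smul_ite, smul_zero]
    congr 1
    apply propext
    constructor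
    · intro h i hi
      rw [hE, Finset.mem_filter]
      exact ⟨hLK hi, h i hi⟩
    · intro h i hi
      have hm := h hi
      rw [hE, Finset.mem_filter] at hm
      exact hm.2
  rw [Finset.sum_congr rfl step1, ← Finset.sum_filter]
  have hpow : K.powerset.filter (fun L => L ⊆ E) = E.powerset := by
    ext L
    simp only [Finset.mem_filter, Finset.mem_powerset]
    constructor
    · exact fun h => h.2
    · exact fun h => ⟨h.trans hEK, h⟩
  rw [hpow, ← Finset.sum_smul, alt_sum_powerset]
  by_cases hEe : E = ∅
  · rw [if_pos hEe, one_smul, if_pos]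
    intro i hi
    have hni : i ∉ E := by rw [hEe]; exact Finset.notMem_empty i
    rw [hE, Finset.mem_filter] at hni
    push_neg at hni
    have h2 := hni hi
    rcases cs.length_mul_simple v i with hh | hh <;> omega
  · rw [if_neg hEe, zero_smul, if_neg]
    intro hc
    apply hEe
    rw [hE, Finset.filter_eq_empty_iff]
    intro i hi
    have := hc i hi
    omega

/-- The modified basis element `x'_I`. -/
noncomputable def xprime {M : CoxeterMatrix B} (cs : CoxeterSystem M W) (I : Finset B) :
    MonoidAlgebra ℚ W :=
  ∑ K ∈ I.powerset, (-(1:ℚ)/2) ^ (I.card - K.card) • descentBasis cs K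

theorem w₀_mul_xprime (hmax : ∀ w : W, ℓ w ≤ ℓ w₀) (hcent : ∀ w : W, w₀ * w = w * w₀)
    (I : Finset B) :
    MonoidAlgebra.single w₀ (1 : ℚ) * xprime cs I = (-1 : ℚ) ^ I.card • xprime cs I := by
  rw [xprime, Finset.mul_sum, Finset.smul_sum]
  have lhs_eq : ∀ K ∈ I.powerset,
      MonoidAlgebra.single w₀ (1:ℚ) * ((-(1:ℚ)/2) ^ (I.card - K.card) • descentBasis cs K)
      = ∑ L ∈ K.powerset,
          ((-(1:ℚ)/2) ^ (I.card - K.card) * (-1:ℚ) ^ L.card) • descentBasis cs L := by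
    intro K _
    rw [mul_smul_comm, w₀_mul_descentBasis cs w₀ hmax hcent K, Finset.smul_sum]
    apply Finset.sum_congr rfl
    intro L _
    rw [smul_smul]
  rw [Finset.sum_congr rfl lhs_eq]
  rw [Finset.sum_comm' (t' := I.powerset)
    (s' := fun L => I.powerset.filter (fun K => L ⊆ K))
    (by
      intro K L
      simp only [Finset.mem_filter, Finset.mem_powerset]
      constructor
      · rintro ⟨h1, h2⟩
        exact ⟨⟨h1, h2⟩, h2.trans h1⟩
      · rintro ⟨⟨h1, h2⟩, _⟩
        exact ⟨h1, h2⟩)]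
  apply Finset.sum_congr rfl
  intro L hL
  have hLI : L ⊆ I := Finset.mem_powerset.mp hL
  rw [← Finset.sum_smul]
  rw [smul_smul]
  congr 1
  have reindex : ∑ K ∈ I.powerset.filter (fun K => L ⊆ K),
      ((-(1:ℚ)/2) ^ (I.card - K.card) * (-1:ℚ) ^ L.card)
      = ∑ N ∈ (I \ L).powerset, ((-(1:ℚ)/2) ^ ((I \ L).card - N.card) * (-1:ℚ) ^ L.card) := by
    apply Finset.sum_nbij' (fun K => K \ L) (fun N => N ∪ L)
    · intro K hK
      rw [Finset.mem_filter, Finset.mem_powerset] at hK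
      rw [Finset.mem_powerset]
      exact Finset.sdiff_subset_sdiff hK.1 (Finset.Subset.refl L)
    · intro N hN
      rw [Finset.mem_powerset] at hN
      rw [Finset.mem_filter, Finset.mem_powerset]
      refine ⟨Finset.union_subset (hN.trans Finset.sdiff_subset) hLI, Finset.subset_union_right⟩
    · intro K hK
      rw [Finset.mem_filter] at hK
      exact Finset.sdiff_union_of_subset hK.2
    · intro N hN
      rw [Finset.mem_powerset] at hN
      apply Finset.union_sdiff_cancel_right
      have : Disjoint N L := by
        apply Finset.disjoint_left.mpr
        intro a ha
        have := hN ha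
        rw [Finset.mem_sdiff] at this
        exact this.2
      exact this
    · intro K hK
      rw [Finset.mem_filter, Finset.mem_powerset] at hK
      congr 2
      have h1 : (K \ L).card = K.card - L.card := Finset.card_sdiff_of_subset hK.2
      have h2 : (I \ L).card = I.card - L.card := Finset.card_sdiff_of_subset hLI
      have h3 : L.card ≤ K.card := Finset.card_le_card hK.2
      have h4 : K.card ≤ I.card := Finset.card_le_card hK.1
      omega
  rw [reindex, ← Finset.sum_mul]
  have hbin : ∑ N ∈ (I \ L).powerset, ((-(1:ℚ)/2)) ^ ((I \ L).card - N.card)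
      = (1/2 : ℚ) ^ (I \ L).card := by
    have := powerset_binomial (I \ L) 1 (-(1:ℚ)/2)
    simp only [one_pow, one_mul] at this
    rw [this]
    norm_num
  rw [hbin]
  have h2 : (I \ L).card = I.card - L.card := Finset.card_sdiff_of_subset hLI
  have h3 : L.card ≤ I.card := Finset.card_le_card hLI
  set d := I.card - L.card with hd
  have hid : I.card = L.card + d := by omega
  have expand : (-(1:ℚ)/2) ^ d = (-1:ℚ) ^ d * (1/2:ℚ) ^ d := by
    rw [← mul_pow]; norm_num
  have h4 : ((-1:ℚ)) ^ d * (-1:ℚ) ^ d = 1 := by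
    rw [← pow_add]; exact Even.neg_one_pow ⟨d, rfl⟩
  rw [hid, pow_add, expand, mul_assoc, ← mul_assoc ((-1:ℚ)^d), h4, one_mul, mul_comm, h2]

theorem descentFiltration_mono {k k' : ℤ} (h : k ≤ k') :
    descentFiltration cs k ≤ descentFiltration cs k' :=
  Submodule.span_mono (Set.image_mono (fun _ hJ => le_trans hJ h))

theorem descentBasis_mem_filtration {I : Finset B} {k : ℤ} (h : (I.card:ℤ) ≤ k) :
    descentBasis cs I ∈ descentFiltration cs k :=
  Submodule.subset_span ⟨I, h, rfl⟩

theorem eigen_drop (hmax : ∀ w : W, ℓ w ≤ ℓ w₀) (hcent : ∀ w : W, w₀ * w = w * w₀)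
    (n : ℕ) (v : MonoidAlgebra ℚ W)
    (hv : v ∈ descentFiltration cs ((n:ℤ) - 1))
    (he : MonoidAlgebra.single w₀ (1:ℚ) * v = ((-1:ℚ)^n) • v) :
    v ∈ descentFiltration cs ((n:ℤ) - 2) := by
  set Q : MonoidAlgebra ℚ W → MonoidAlgebra ℚ W :=
    fun y => (1/2 : ℚ) • (y + (-1:ℚ)^n • (MonoidAlgebra.single w₀ (1:ℚ) * y)) with hQ
  have hQv : Q v = v := by
    rw [hQ]
    simp only
    rw [he, smul_smul, ← pow_add, Even.neg_one_pow ⟨n, rfl⟩, one_smul]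
    module
  suffices key : ∀ y, y ∈ descentFiltration cs ((n:ℤ) - 1) →
      Q y ∈ descentFiltration cs ((n:ℤ) - 2) by
    rw [← hQv]
    exact key v hv
  intro y hy
  clear he hQv hv v
  induction hy using Submodule.span_induction with
  | mem z hz =>
      obtain ⟨J, hJ, rfl⟩ := hz
      have hJn : (J.card : ℤ) ≤ (n:ℤ) - 1 := hJ
      rw [hQ]
      simp only
      apply Submodule.smul_mem
      rw [w₀_mul_descentBasis cs w₀ hmax hcent J,
        ← Finset.add_sum_erase _ _ (Finset.mem_powerset_self J), smul_add, ← add_assoc]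
      have hS : (-1:ℚ)^n • ∑ L ∈ J.powerset.erase J, (-1:ℚ)^L.card • descentBasis cs L
          ∈ descentFiltration cs ((n:ℤ) - 2) := by
        apply Submodule.smul_mem
        apply Submodule.sum_mem
        intro L hL
        apply Submodule.smul_mem
        apply descentBasis_mem_filtration
        rw [Finset.mem_erase, Finset.mem_powerset] at hL
        have hssub : L ⊂ J := ssubset_of_subset_of_ne hL.2 hL.1
        have := Finset.card_lt_card hssub
        omega
      apply add_mem _ hS
      have part1 : descentBasis cs J + (-1:ℚ)^n • ((-1:ℚ)^J.card • descentBasis cs J)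
          = (1 + (-1:ℚ)^(n + J.card)) • descentBasis cs J := by
        rw [smul_smul, ← pow_add, add_smul, one_smul]
      rw [part1]
      by_cases hJc : (J.card:ℤ) ≤ (n:ℤ) - 2
      · exact Submodule.smul_mem _ _ (descentBasis_mem_filtration cs hJc)
      · have hn1 : J.card + 1 = n := by omega
        have hodd : Odd (n + J.card) := ⟨J.card, by omega⟩
        rw [hodd.neg_one_pow]
        norm_num
  | zero =>
      rw [hQ]
      simp
  | add a b _ _ iha ihb =>
      have hab : Q (a + b) = Q a + Q b := by
        simp only [hQ, mul_add]
        module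
      rw [hab]
      exact add_mem iha ihb
  | smul c a _ iha =>
      have hca : Q (c • a) = c • Q a := by
        simp only [hQ, mul_smul_comm]
        module
      rw [hca]
      exact Submodule.smul_mem _ _ iha

theorem descentBasis_univ : descentBasis cs (Finset.univ : Finset B) = 1 := by
  have hzero : ∀ w : W, w ≠ 1 →
      (if ∀ i ∈ (Finset.univ : Finset B), ℓ w < ℓ (w * s i)
        then MonoidAlgebra.single w (1:ℚ) else 0) = 0 := by
    intro w hw
    rw [if_neg]
    intro hc
    obtain ⟨i, hi⟩ := cs.exists_rightDescent_of_ne_one hw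
    have := hc i (Finset.mem_univ i)
    unfold CoxeterSystem.IsRightDescent at hi
    omega
  rw [descentBasis, Fintype.sum_eq_single (1:W) hzero, if_pos, MonoidAlgebra.one_def]
  intro i _
  rw [one_mul, cs.length_one, cs.length_simple]
  norm_num

theorem rad_mul_descentBasis
    (hmax : ∀ w : W, ℓ w ≤ ℓ w₀) (hcent : ∀ w : W, w₀ * w = w * w₀)
    (A : Subalgebra ℚ (MonoidAlgebra ℚ W))
    (t : Finset B → MonoidAlgebra ℚ W → ℚ)
    (ht : ∀ (J : Finset B), ∀ x ∈ A,
      x * descentBasis cs J - (t J x) • descentBasis cs J ∈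
        Submodule.span ℚ (descentBasis cs '' {K | K ⊂ J}))
    (x : MonoidAlgebra ℚ W) (hx1 : x ∈ A) (hx2 : ∀ J, t J x = 0)
    (hx3 : MonoidAlgebra.single w₀ (1:ℚ) * x = x * MonoidAlgebra.single w₀ (1:ℚ)) :
    ∀ I : Finset B, x * descentBasis cs I ∈ descentFiltration cs ((I.card:ℤ) - 2) := by
  suffices h : ∀ (n:ℕ) (I : Finset B), I.card = n →
      x * descentBasis cs I ∈ descentFiltration cs ((I.card:ℤ) - 2) by
    exact fun I => h I.card I rfl
  intro n
  induction n using Nat.strong_induction_on with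
  | _ n ih =>
    intro I hI
    have fact1 : ∀ K : Finset B, K ⊆ I →
        x * descentBasis cs K ∈ descentFiltration cs ((I.card:ℤ) - 1) := by
      intro K hK
      have hres := ht K x hx1
      rw [hx2 K, zero_smul, sub_zero] at hres
      refine Submodule.span_le.mpr ?_ hres
      rintro z ⟨K', hK', rfl⟩
      apply Submodule.subset_span
      refine ⟨K', ?_, rfl⟩
      have h1 := Finset.card_lt_card hK'
      have h2 := Finset.card_le_card hK
      show (K'.card : ℤ) ≤ (I.card:ℤ) - 1
      omega
    have fact2 : x * xprime cs I ∈ descentFiltration cs ((I.card:ℤ) - 1) := by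
      rw [xprime, Finset.mul_sum]
      apply Submodule.sum_mem
      intro K hK
      rw [mul_smul_comm]
      exact Submodule.smul_mem _ _ (fact1 K (Finset.mem_powerset.mp hK))
    have fact3 : MonoidAlgebra.single w₀ (1:ℚ) * (x * xprime cs I)
        = (-1:ℚ)^I.card • (x * xprime cs I) := by
      rw [← mul_assoc, hx3, mul_assoc, w₀_mul_xprime cs w₀ hmax hcent I, mul_smul_comm]
    have fact4 : x * xprime cs I ∈ descentFiltration cs ((I.card:ℤ) - 2) :=
      eigen_drop cs w₀ hmax hcent I.card _ fact2 fact3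
    have hxp : x * descentBasis cs I
        = x * xprime cs I - ∑ K ∈ I.powerset.erase I,
            (-(1:ℚ)/2)^(I.card - K.card) • (x * descentBasis cs K) := by
      rw [xprime, ← Finset.add_sum_erase _ _ (Finset.mem_powerset_self I), Nat.sub_self,
        pow_zero, one_smul, mul_add, Finset.mul_sum]
      have : ∑ K ∈ I.powerset.erase I, x * ((-(1:ℚ)/2)^(I.card - K.card) • descentBasis cs K)
          = ∑ K ∈ I.powerset.erase I, (-(1:ℚ)/2)^(I.card - K.card) • (x * descentBasis cs K) := by
        apply Finset.sum_congr rfl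
        intro K _
        rw [mul_smul_comm]
      rw [this, add_sub_cancel_right]
    rw [hxp]
    apply sub_mem fact4
    apply Submodule.sum_mem
    intro K hK
    apply Submodule.smul_mem
    rw [Finset.mem_erase, Finset.mem_powerset] at hK
    have hssub : K ⊂ I := ssubset_of_subset_of_ne hK.2 hK.1
    have hlt := Finset.card_lt_card hssub
    refine descentFiltration_mono cs ?_ (ih K.card (by omega) K rfl)
    omega

end CoxAux

set_option synthInstance.maxHeartbeats 1000000 in
set_option maxHeartbeats 1000000 in
/-- Suppose the longest element `w₀` of `W` is central. Elements of
`(Ker θ)^{σ₀} = Rad(Σ(W)^{σ₀})` — i.e. elements `x` of `Σ(W)` commuting with `w₀` and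
killed by all the irreducible characters `τ_{λ(J)}` (characterized by the eigenvalue
property `x·x_J ≡ τ_{λ(J)}(x)·x_J` mod span{x_K : K ⊊ J}) — satisfy
`x·Σ_k(W) ⊆ Σ_{k−2}(W)` for all `k`; hence any product of `r` such elements lies in
`Σ_{|S|−2r}(W)`, and any product of `⌈(|S|+1)/2⌉` of them vanishes, so the Loewy
length of `Σ(W)^{σ₀}` (here all of `Σ(W)`) is at most `⌈(|S|+1)/2⌉`. -/
theorem loewy_length_bound_central {M : CoxeterMatrix B}
    (cs : CoxeterSystem M W) (A : Subalgebra ℚ (MonoidAlgebra ℚ W))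
    (hA : IsDescentAlgebra cs A) (w₀ : W)
    (hw₀ : ∀ w : W, cs.length w ≤ cs.length w₀) (hcent : ∀ w : W, w₀ * w = w * w₀)
    (t : Finset B → MonoidAlgebra ℚ W → ℚ)
    (ht : ∀ (J : Finset B), ∀ x ∈ A,
      x * descentBasis cs J - (t J x) • descentBasis cs J ∈
        Submodule.span ℚ (descentBasis cs '' {K | K ⊂ J})) :
    (∀ k : ℤ, ∀ x : MonoidAlgebra ℚ W,
      (x ∈ A ∧ (∀ J, t J x = 0) ∧
        MonoidAlgebra.single w₀ (1 : ℚ) * x = x * MonoidAlgebra.single w₀ (1 : ℚ)) →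
      ∀ y ∈ descentFiltration cs k, x * y ∈ descentFiltration cs (k - 2)) ∧
    (∀ r : ℕ, ∀ xs : Fin r → MonoidAlgebra ℚ W,
      (∀ i, xs i ∈ A ∧ (∀ J, t J (xs i) = 0) ∧
        MonoidAlgebra.single w₀ (1 : ℚ) * xs i =
          xs i * MonoidAlgebra.single w₀ (1 : ℚ)) →
      (List.ofFn xs).prod ∈
        descentFiltration cs ((Fintype.card B : ℤ) - 2 * r)) ∧
    (∀ xs : Fin ((Fintype.card B + 2) / 2) → MonoidAlgebra ℚ W,
      (∀ i, xs i ∈ A ∧ (∀ J, t J (xs i) = 0) ∧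
        MonoidAlgebra.single w₀ (1 : ℚ) * xs i =
          xs i * MonoidAlgebra.single w₀ (1 : ℚ)) →
      (List.ofFn xs).prod = 0) := by
  have part1 : ∀ k : ℤ, ∀ x : MonoidAlgebra ℚ W,
      (x ∈ A ∧ (∀ J, t J x = 0) ∧
        MonoidAlgebra.single w₀ (1 : ℚ) * x = x * MonoidAlgebra.single w₀ (1 : ℚ)) →
      ∀ y ∈ descentFiltration cs k, x * y ∈ descentFiltration cs (k - 2) := by
    rintro k x ⟨hx1, hx2, hx3⟩ y hy
    induction hy using Submodule.span_induction with
    | mem z hz =>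
        obtain ⟨J, hJ, rfl⟩ := hz
        refine CoxAux.descentFiltration_mono cs ?_
          (CoxAux.rad_mul_descentBasis cs w₀ hw₀ hcent A t ht x hx1 hx2 hx3 J)
        have hJk : (J.card:ℤ) ≤ k := hJ
        omega
    | zero => rw [mul_zero]; exact Submodule.zero_mem _
    | add a b _ _ iha ihb => rw [mul_add]; exact add_mem iha ihb
    | smul c a _ iha => rw [mul_smul_comm]; exact Submodule.smul_mem _ _ iha
  have part2 : ∀ (l : List (MonoidAlgebra ℚ W)),
      (∀ z ∈ l, z ∈ A ∧ (∀ J, t J z = 0) ∧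
        MonoidAlgebra.single w₀ (1 : ℚ) * z = z * MonoidAlgebra.single w₀ (1 : ℚ)) →
      l.prod ∈ descentFiltration cs ((Fintype.card B : ℤ) - 2 * l.length) := by
    intro l
    induction l with
    | nil =>
        intro _
        simp only [List.prod_nil, List.length_nil, Nat.cast_zero, mul_zero, sub_zero]
        rw [← CoxAux.descentBasis_univ cs]
        exact CoxAux.descentBasis_mem_filtration cs (by simp)
    | cons z l ihl =>
        intro hall
        rw [List.prod_cons]
        have hz := hall z List.mem_cons_self
        have hl := ihl (fun w hw => hall w (List.mem_cons_of_mem z hw))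
        have hres := part1 ((Fintype.card B : ℤ) - 2 * l.length) z hz _ hl
        have hidx : (Fintype.card B : ℤ) - 2 * ((z :: l).length)
            = ((Fintype.card B : ℤ) - 2 * l.length) - 2 := by
          rw [List.length_cons]
          push_cast
          ring
        rw [hidx]
        exact hres
  refine ⟨part1, ?_, ?_⟩
  · intro r xs hxs
    have hres := part2 (List.ofFn xs) (fun z hz => by
      obtain ⟨i, rfl⟩ := List.mem_ofFn.mp hz
      exact hxs i)
    rwa [List.length_ofFn] at hres
  · intro xs hxs
    have hmem := part2 (List.ofFn xs) (fun z hz => by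
      obtain ⟨i, rfl⟩ := List.mem_ofFn.mp hz
      exact hxs i)
    rw [List.length_ofFn] at hmem
    have hneg : (Fintype.card B : ℤ) - 2 * (((Fintype.card B + 2) / 2 : ℕ) : ℤ) ≤ -1 := by
      have h2 : Fintype.card B + 1 ≤ 2 * ((Fintype.card B + 2) / 2) := by omega
      have h3 : ((Fintype.card B : ℤ) + 1) ≤ 2 * (((Fintype.card B + 2) / 2 : ℕ) : ℤ) := by
        exact_mod_cast h2
      omega
    have hbot : descentFiltration cs (-1 : ℤ) = ⊥ := by
      rw [descentFiltration]
      have hempty : {J : Finset B | (J.card : ℤ) ≤ (-1:ℤ)} = ∅ := by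
        ext J
        simp only [Set.mem_setOf_eq, Set.mem_empty_iff_false, iff_false, not_le]
        omega
      rw [hempty, Set.image_empty, Submodule.span_empty]
    have hfin := CoxAux.descentFiltration_mono cs hneg hmem
    rw [hbot] at hfin
    exact (Submodule.mem_bot ℚ).mp hfin
end
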